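/- arXiv:2603.19894 — 3 statements merged into one kernel-verified Lean document; each statement's English description precedes it below -/
import Mathlib

section
/- Fix ϑ ∈ (0,1) and let β : Σ → ℝ be a ϑ-Hölder function. Then there exist functions β̃ : Σ → ℝ and χ : Σ → ℝ, both ϑ^{1/2}-Hölder, such that β̃ depends only on the nonnegative coordinates (β̃(ω) = β̃(ω′) whenever ω_k = ω′_k for all k ≥ 0) and β = β̃ + χ − χ∘σ on Σ. -/
open MeasureTheory Filter Topology
open scoped ENNReal BoundedContinuousFunction

noncomputable section

/-- Two-sided binary sequence space `Σ = {0,1}^ℤ`. -/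
abbrev Seq2 : Type := ℤ → Bool

/-- One-sided binary sequence space `Σ⁺ = {0,1}^ℕ`. -/
abbrev Seq1 : Type := ℕ → Bool

/-- The shift map on two-sided sequences, `(σω)_k = ω_{k+1}`. -/
def shift2 (ω : Seq2) : Seq2 := fun k => ω (k + 1)

/-- The shift map on one-sided sequences, `(σω)_k = ω_{k+1}`. -/
def shift1 (ω : Seq1) : Seq1 := fun k => ω (k + 1)

/-- Two two-sided sequences agree on all indices `|i| < N`. -/
def Agree2 (N : ℕ) (ω ω' : Seq2) : Prop := ∀ i : ℤ, |i| < (N : ℤ) → ω i = ω' i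

/-- Two one-sided sequences agree on all indices `i < N`. -/
def Agree1 (N : ℕ) (ω ω' : Seq1) : Prop := ∀ i : ℕ, i < N → ω i = ω' i

/-- `N`-th variation of a function on the two-sided shift space. -/
def var2 {E : Type*} [SeminormedAddCommGroup E] (f : Seq2 → E) (N : ℕ) : ℝ≥0∞ :=
  ⨆ (ω : Seq2) (ω' : Seq2) (_ : Agree2 N ω ω'), (‖f ω - f ω'‖₊ : ℝ≥0∞)

/-- `N`-th variation of a function on the one-sided shift space. -/
def var1 {E : Type*} [SeminormedAddCommGroup E] (f : Seq1 → E) (N : ℕ) : ℝ≥0∞ :=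
  ⨆ (ω : Seq1) (ω' : Seq1) (_ : Agree1 N ω ω'), (‖f ω - f ω'‖₊ : ℝ≥0∞)

/-- Hölder seminorm `|f|_θ = sup_{N ≥ 1} θ^{-N} var_N f` (two-sided). -/
def hSemi2 {E : Type*} [SeminormedAddCommGroup E] (θ : ℝ) (f : Seq2 → E) : ℝ≥0∞ :=
  ⨆ (N : ℕ) (_ : 1 ≤ N), (ENNReal.ofReal θ)⁻¹ ^ N * var2 f N

/-- Hölder seminorm `|f|_θ = sup_{N ≥ 1} θ^{-N} var_N f` (one-sided). -/
def hSemi1 {E : Type*} [SeminormedAddCommGroup E] (θ : ℝ) (f : Seq1 → E) : ℝ≥0∞ :=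
  ⨆ (N : ℕ) (_ : 1 ≤ N), (ENNReal.ofReal θ)⁻¹ ^ N * var1 f N

/-- Sup norm (two-sided). -/
def supNorm2 {E : Type*} [SeminormedAddCommGroup E] (f : Seq2 → E) : ℝ≥0∞ :=
  ⨆ ω : Seq2, (‖f ω‖₊ : ℝ≥0∞)

/-- Sup norm (one-sided). -/
def supNorm1 {E : Type*} [SeminormedAddCommGroup E] (f : Seq1 → E) : ℝ≥0∞ :=
  ⨆ ω : Seq1, (‖f ω‖₊ : ℝ≥0∞)

/-- Hölder norm `‖f‖_θ = sup|f| + |f|_θ` (two-sided). -/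
def hNorm2 {E : Type*} [SeminormedAddCommGroup E] (θ : ℝ) (f : Seq2 → E) : ℝ≥0∞ :=
  supNorm2 f + hSemi2 θ f

/-- Hölder norm `‖f‖_θ = sup|f| + |f|_θ` (one-sided). -/
def hNorm1 {E : Type*} [SeminormedAddCommGroup E] (θ : ℝ) (f : Seq1 → E) : ℝ≥0∞ :=
  supNorm1 f + hSemi1 θ f

/-- `f` is `θ`-Hölder (two-sided). -/
def IsHolder2 {E : Type*} [SeminormedAddCommGroup E] (θ : ℝ) (f : Seq2 → E) : Prop :=
  hNorm2 θ f < ⊤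

/-- `f` is `θ`-Hölder (one-sided). -/
def IsHolder1 {E : Type*} [SeminormedAddCommGroup E] (θ : ℝ) (f : Seq1 → E) : Prop :=
  hNorm1 θ f < ⊤

/-- `μ` is the Bernoulli (1/2, 1/2) product measure on `{0,1}^ℤ`: it is a probability
measure giving each cylinder determined by finitely many coordinates its natural mass. -/
def IsBernoulli2 (μ : Measure Seq2) : Prop :=
  IsProbabilityMeasure μ ∧
    ∀ (s : Finset ℤ) (x : ℤ → Bool),
      μ {ω : Seq2 | ∀ i ∈ s, ω i = x i} = (1 / 2 : ℝ≥0∞) ^ s.card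

/-- `μ` is the Bernoulli (1/2, 1/2) product measure on `{0,1}^ℕ`. -/
def IsBernoulli1 (μ : Measure Seq1) : Prop :=
  IsProbabilityMeasure μ ∧
    ∀ (s : Finset ℕ) (x : ℕ → Bool),
      μ {ω : Seq1 | ∀ i ∈ s, ω i = x i} = (1 / 2 : ℝ≥0∞) ^ s.card

/-- Birkhoff sums `β_n(ω) = ∑_{j<n} β(σ^j ω)` (two-sided). -/
def bSum2 (β : Seq2 → ℝ) (n : ℕ) (ω : Seq2) : ℝ :=
  ∑ j ∈ Finset.range n, β (shift2^[j] ω)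

/-- Birkhoff sums `β_n(ω) = ∑_{j<n} β(σ^j ω)` (one-sided). -/
def bSum1 (β : Seq1 → ℝ) (n : ℕ) (ω : Seq1) : ℝ :=
  ∑ j ∈ Finset.range n, β (shift1^[j] ω)

/-- Condition (WM_m): the equation `e^{imβ(ω)} A(σω) = ν A(ω)` has only the trivial
solution `ν = 1`, `A` constant, among not-identically-zero `θ`-Hölder functions. -/
def WM2 (θ : ℝ) (β : Seq2 → ℝ) (m : ℕ) : Prop :=
  ∀ (A : Seq2 → ℂ) (ν : ℂ), IsHolder2 θ A → (∃ ω, A ω ≠ 0) →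
    (∀ ω, Complex.exp (Complex.I * (m : ℂ) * (β ω : ℂ)) * A (shift2 ω) = ν * A ω) →
    ν = 1 ∧ ∀ ω ω', A ω = A ω'

/-- Condition (WM_m) for the one-sided shift. -/
def WM1 (θ : ℝ) (β : Seq1 → ℝ) (m : ℕ) : Prop :=
  ∀ (A : Seq1 → ℂ) (ν : ℂ), IsHolder1 θ A → (∃ ω, A ω ≠ 0) →
    (∀ ω, Complex.exp (Complex.I * (m : ℂ) * (β ω : ℂ)) * A (shift1 ω) = ν * A ω) →
    ν = 1 ∧ ∀ ω ω', A ω = A ω'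

/-- Observable in the class `E_{θ,m}` with Fourier coefficient `A`:
`F(ω,s) = A(ω) e^{ims} + conj(A(ω)) e^{-ims}` (a real-valued function viewed in `ℂ`). -/
def obs (m : ℕ) (A : Seq2 → ℂ) (ω : Seq2) (s : ℝ) : ℂ :=
  A ω * Complex.exp (Complex.I * (m : ℂ) * (s : ℂ)) +
    (starRingEnd ℂ) (A ω) * Complex.exp (-(Complex.I * (m : ℂ) * (s : ℂ)))

/-- Normalized Haar (Lebesgue) measure on `𝕋 = ℝ/2πℤ`, realized on the fundamental
domain `(0, 2π]` of the real line. -/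
def haarT : Measure ℝ :=
  (ENNReal.ofReal (2 * Real.pi))⁻¹ • (volume.restrict (Set.Ioc 0 (2 * Real.pi)))

/-- A function on the two-sided shift space depends only on the coordinates `k ≥ 0`. -/
def DependsOnNonneg {α : Type*} (f : Seq2 → α) : Prop :=
  ∀ ω ω' : Seq2, (∀ k : ℤ, 0 ≤ k → ω k = ω' k) → f ω = f ω'

/-- A function on the two-sided shift space depends only on the coordinates `k ≤ 0`. -/
def DependsOnNonpos {α : Type*} (f : Seq2 → α) : Prop :=
  ∀ ω ω' : Seq2, (∀ k : ℤ, k ≤ 0 → ω k = ω' k) → f ω = f ω'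

end

noncomputable section SinaiAux

/-- Shift iterate formula. -/
lemma shift2_iter (j : ℕ) (ω : Seq2) (i : ℤ) : (shift2^[j] ω) i = ω (i + j) := by
  induction j generalizing ω i with
  | zero => simp
  | succ n ih =>
    rw [Function.iterate_succ_apply, ih]
    show ω (i + n + 1) = ω (i + (n + 1))
    congr 1; ring

lemma agree2_shift {N : ℕ} (j : ℕ) {ω ω' : Seq2} (h : Agree2 N ω ω') :
    Agree2 (N - j) (shift2^[j] ω) (shift2^[j] ω') := by
  intro i hi
  rw [shift2_iter, shift2_iter]
  rcases le_or_gt j N with hj | hj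
  · apply h
    have h1 : |i + (j : ℤ)| ≤ |i| + j := by
      calc |i + (j : ℤ)| ≤ |i| + |(j : ℤ)| := abs_add_le _ _
        _ = |i| + j := by rw [Int.abs_natCast]
    have h2 : ((N - j : ℕ) : ℤ) = (N : ℤ) - j := by
      rw [Nat.cast_sub hj]
    omega
  · exfalso
    rw [Nat.sub_eq_zero_of_le hj.le] at hi
    simp at hi
    exact absurd hi (not_lt.2 (abs_nonneg i))

/-- Forgetting the negative coordinates. -/
def psiMap (ω : Seq2) : Seq2 := fun k => if 0 ≤ k then ω k else false

lemma agree2_psi {N : ℕ} {ω ω' : Seq2} (h : Agree2 N ω ω') :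
    Agree2 N (psiMap ω) (psiMap ω') := by
  intro i hi
  unfold psiMap
  by_cases h0 : 0 ≤ i
  · simp only [if_pos h0]; exact h i hi
  · simp only [if_neg h0]

lemma agree2_of_nonneg_agree {ω ω' : Seq2} (h : ∀ k : ℤ, 0 ≤ k → ω k = ω' k) (j : ℕ) :
    Agree2 (j + 1) (shift2^[j] ω) (shift2^[j] ω') := by
  intro i hi
  rw [shift2_iter, shift2_iter]
  apply h
  have := neg_abs_le i
  omega

lemma agree2_shift_psi (j : ℕ) (ω : Seq2) :
    Agree2 (j + 1) (shift2^[j] ω) (shift2^[j] (psiMap ω)) := by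
  apply agree2_of_nonneg_agree
  intro k hk
  unfold psiMap
  rw [if_pos hk]

lemma holder2_parts {θ : ℝ} {f : Seq2 → ℝ} (h : IsHolder2 θ f) :
    supNorm2 f ≠ ⊤ ∧ hSemi2 θ f ≠ ⊤ := by
  have := ENNReal.add_lt_top.mp h
  exact ⟨this.1.ne, this.2.ne⟩

lemma sup_bound2 {f : Seq2 → ℝ} (h : supNorm2 f ≠ ⊤) (ω : Seq2) :
    |f ω| ≤ (supNorm2 f).toReal := by
  have h1 : (‖f ω‖₊ : ℝ≥0∞) ≤ supNorm2 f := le_iSup (fun ω => (‖f ω‖₊ : ℝ≥0∞)) ω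
  have h2 := ENNReal.toReal_mono h h1
  simpa [Real.norm_eq_abs] using h2

lemma var_bound2 {θ : ℝ} (hθ0 : 0 < θ) {f : Seq2 → ℝ} (h : hSemi2 θ f ≠ ⊤)
    (N : ℕ) (hN : 1 ≤ N) (ω ω' : Seq2) (hag : Agree2 N ω ω') :
    |f ω - f ω'| ≤ (hSemi2 θ f).toReal * θ ^ N := by
  set x : ℝ≥0∞ := ENNReal.ofReal θ with hx
  have hx0 : x ≠ 0 := by simp [hx, ENNReal.ofReal_eq_zero]; linarith
  have hxt : x ≠ ⊤ := ENNReal.ofReal_ne_top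
  have h1 : x⁻¹ ^ N * var2 f N ≤ hSemi2 θ f := by
    refine le_trans (le_of_eq rfl) ?_
    exact le_iSup₂ (f := fun N (_ : 1 ≤ N) => x⁻¹ ^ N * var2 f N) N hN
  have h2 : var2 f N ≤ hSemi2 θ f * x ^ N := by
    have key : x ^ N * x⁻¹ ^ N = 1 := by
      rw [← mul_pow, ENNReal.mul_inv_cancel hx0 hxt, one_pow]
    calc var2 f N = (x ^ N * x⁻¹ ^ N) * var2 f N := by rw [key, one_mul]
      _ = x ^ N * (x⁻¹ ^ N * var2 f N) := by ring
      _ ≤ x ^ N * hSemi2 θ f := by exact mul_le_mul_right h1 _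
      _ = hSemi2 θ f * x ^ N := mul_comm _ _
  have h3 : (‖f ω - f ω'‖₊ : ℝ≥0∞) ≤ var2 f N := by
    refine le_trans (le_of_eq rfl) ?_
    exact le_iSup₂_of_le ω ω' (le_iSup_of_le hag le_rfl)
  have hne : hSemi2 θ f * x ^ N ≠ ⊤ :=
    ENNReal.mul_ne_top h (by exact ENNReal.pow_ne_top hxt)
  have h4 := ENNReal.toReal_mono hne (h3.trans h2)
  rw [ENNReal.toReal_mul, ENNReal.toReal_pow, ENNReal.toReal_ofReal hθ0.le] at h4
  simpa [Real.norm_eq_abs] using h4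

lemma holder2_of_bounds {θ : ℝ} (hθ0 : 0 < θ) {f : Seq2 → ℝ} {B C : ℝ} (hC0 : 0 ≤ C)
    (hB : ∀ ω, |f ω| ≤ B)
    (hV : ∀ N ω ω', 1 ≤ N → Agree2 N ω ω' → |f ω - f ω'| ≤ C * θ ^ N) :
    IsHolder2 θ f := by
  set x : ℝ≥0∞ := ENNReal.ofReal θ with hx
  have hx0 : x ≠ 0 := by simp [hx, ENNReal.ofReal_eq_zero]; linarith
  have hxt : x ≠ ⊤ := ENNReal.ofReal_ne_top
  have hsup : supNorm2 f ≤ ENNReal.ofReal B := by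
    refine iSup_le fun ω => ?_
    rw [← enorm_eq_nnnorm, ← ofReal_norm]
    exact ENNReal.ofReal_le_ofReal (by simpa [Real.norm_eq_abs] using hB ω)
  have hvar : ∀ N, 1 ≤ N → var2 f N ≤ ENNReal.ofReal C * x ^ N := by
    intro N hN
    refine iSup_le fun ω => iSup_le fun ω' => iSup_le fun hag => ?_
    rw [← enorm_eq_nnnorm, ← ofReal_norm]
    calc ENNReal.ofReal ‖f ω - f ω'‖ ≤ ENNReal.ofReal (C * θ ^ N) :=
          ENNReal.ofReal_le_ofReal (by simpa [Real.norm_eq_abs] using hV N ω ω' hN hag)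
      _ = ENNReal.ofReal C * x ^ N := by
          rw [ENNReal.ofReal_mul hC0, ENNReal.ofReal_pow hθ0.le]
  have hsemi : hSemi2 θ f ≤ ENNReal.ofReal C := by
    refine iSup_le fun N => iSup_le fun hN => ?_
    calc x⁻¹ ^ N * var2 f N ≤ x⁻¹ ^ N * (ENNReal.ofReal C * x ^ N) :=
          mul_le_mul_right (hvar N hN) _
      _ = ENNReal.ofReal C * (x⁻¹ ^ N * x ^ N) := by ring
      _ = ENNReal.ofReal C := by
          rw [← mul_pow, ENNReal.inv_mul_cancel hx0 hxt, one_pow, mul_one]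
  calc hNorm2 θ f ≤ ENNReal.ofReal B + ENNReal.ofReal C := add_le_add hsup hsemi
    _ < ⊤ := by finiteness

end SinaiAux

/-- Sinai's lemma: any `θ`-Hölder function `β` on the two-sided shift
space is cohomologous, via `θ^{1/2}`-Hölder functions, to a function `β̃` depending only
on the nonnegative coordinates: `β = β̃ + χ − χ∘σ`. -/
theorem statement10
    (θ : ℝ) (hθ : θ ∈ Set.Ioo (0 : ℝ) 1)
    (β : Seq2 → ℝ) (hβ : IsHolder2 θ β) :
    ∃ βt χ : Seq2 → ℝ,
      IsHolder2 (Real.sqrt θ) βt ∧ IsHolder2 (Real.sqrt θ) χ ∧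
      DependsOnNonneg βt ∧
      ∀ ω : Seq2, β ω = βt ω + χ ω - χ (shift2 ω) := by
  obtain ⟨hθ0, hθ1⟩ := hθ
  set t := Real.sqrt θ with htdef
  have ht0 : 0 < t := Real.sqrt_pos.mpr hθ0
  have ht1 : t < 1 := by
    rw [htdef, show (1:ℝ) = Real.sqrt 1 by simp]
    exact Real.sqrt_lt_sqrt hθ0.le hθ1
  have ht2 : t ^ 2 = θ := Real.sq_sqrt hθ0.le
  have hθt : θ ≤ t := by nlinarith [Real.sqrt_nonneg θ]
  obtain ⟨hsupfin, hsemifin⟩ := holder2_parts hβ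
  set B := (supNorm2 β).toReal with hBdef
  set C := (hSemi2 θ β).toReal with hCdef
  have hC0 : 0 ≤ C := ENNReal.toReal_nonneg
  have hβsup : ∀ ω, |β ω| ≤ B := sup_bound2 hsupfin
  have hβvar : ∀ N, 1 ≤ N → ∀ ω ω', Agree2 N ω ω' → |β ω - β ω'| ≤ C * θ ^ N :=
    fun N hN ω ω' hag => var_bound2 hθ0 hsemifin N hN ω ω' hag
  -- key power inequality
  have hpow : ∀ a N : ℕ, N ≤ 2 * a → θ ^ a ≤ t ^ N := by
    intro a N hle
    calc θ ^ a = (t ^ 2) ^ a := by rw [ht2]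
      _ = t ^ (2 * a) := by rw [← pow_mul]
      _ ≤ t ^ N := pow_le_pow_of_le_one ht0.le ht1.le hle
  -- the coboundary term
  set g : ℕ → Seq2 → ℝ := fun j ω => β (shift2^[j] ω) - β (shift2^[j] (psiMap ω)) with hgdef
  have hg : ∀ j ω, |g j ω| ≤ C * θ ^ (j + 1) := by
    intro j ω
    exact hβvar (j + 1) (by omega) _ _ (agree2_shift_psi j ω)
  have hgeom : Summable (fun j : ℕ => C * θ ^ (j + 1)) := by
    have := (summable_geometric_of_lt_one hθ0.le hθ1).mul_left (C * θ)
    refine this.congr fun j => ?_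
    rw [pow_succ]; ring
  have hgsum : ∀ ω, Summable (fun j => g j ω) := by
    intro ω
    refine Summable.of_norm_bounded hgeom fun j => ?_
    simpa [Real.norm_eq_abs] using hg j ω
  set χ : Seq2 → ℝ := fun ω => ∑' j, g j ω with hχdef
  have hsum_geom : ∑' j : ℕ, θ ^ j = (1 - θ)⁻¹ := tsum_geometric_of_lt_one hθ0.le hθ1
  have hinv0 : 0 ≤ (1 - θ)⁻¹ := inv_nonneg.mpr (by linarith)
  set S := C * θ * (1 - θ)⁻¹ with hSdef
  have hS0 : 0 ≤ S := by positivity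
  have hχsup : ∀ ω, |χ ω| ≤ S := by
    intro ω
    have h1 : ‖∑' j, g j ω‖ ≤ ∑' j, C * θ ^ (j + 1) := by
      refine norm_tsum_le_tsum_norm ?_ |>.trans (Summable.tsum_le_tsum (fun j => by
        simpa [Real.norm_eq_abs] using hg j ω) ((hgsum ω).norm) hgeom)
      exact (hgsum ω).norm
    have h2 : ∑' j : ℕ, C * θ ^ (j + 1) = S := by
      have : ∀ j : ℕ, C * θ ^ (j + 1) = (C * θ) * θ ^ j := fun j => by rw [pow_succ]; ring
      rw [tsum_congr this, tsum_mul_left, hsum_geom, hSdef]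
    rw [← h2]
    simpa [Real.norm_eq_abs] using h1
  set K := 4 * C * (1 - θ)⁻¹ with hKdef
  have hK0 : 0 ≤ K := by positivity
  -- variation bound for χ
  have hχvar : ∀ N, 1 ≤ N → ∀ ω ω', Agree2 N ω ω' → |χ ω - χ ω'| ≤ K * t ^ N := by
    intro N hN ω ω' hag
    set M := N / 2 with hMdef
    set d : ℕ → ℝ := fun j => g j ω - g j ω' with hddef
    have hdsum : Summable d := (hgsum ω).sub (hgsum ω')
    have hd2 : ∀ j, |d j| ≤ 2 * C * θ ^ (j + 1) := by
      intro j
      calc |d j| ≤ |g j ω| + |g j ω'| := abs_sub _ _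
        _ ≤ C * θ ^ (j + 1) + C * θ ^ (j + 1) := add_le_add (hg j ω) (hg j ω')
        _ = 2 * C * θ ^ (j + 1) := by ring
    have hd1 : ∀ j < M, |d j| ≤ 2 * C * θ ^ (N - j) := by
      intro j hj
      have hjN : j < N := by omega
      have h1N : 1 ≤ N - j := by omega
      have ha : |β (shift2^[j] ω) - β (shift2^[j] ω')| ≤ C * θ ^ (N - j) :=
        hβvar (N - j) h1N _ _ (agree2_shift j hag)
      have hb : |β (shift2^[j] (psiMap ω)) - β (shift2^[j] (psiMap ω'))| ≤ C * θ ^ (N - j) :=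
        hβvar (N - j) h1N _ _ (agree2_shift j (agree2_psi hag))
      calc |d j| = |(β (shift2^[j] ω) - β (shift2^[j] ω')) -
            (β (shift2^[j] (psiMap ω)) - β (shift2^[j] (psiMap ω')))| := by
            rw [hddef, hgdef]; ring_nf
        _ ≤ |β (shift2^[j] ω) - β (shift2^[j] ω')| +
            |β (shift2^[j] (psiMap ω)) - β (shift2^[j] (psiMap ω'))| := abs_sub _ _
        _ ≤ C * θ ^ (N - j) + C * θ ^ (N - j) := add_le_add ha hb
        _ = 2 * C * θ ^ (N - j) := by ring
    have hsplit : χ ω - χ ω' = ∑ j ∈ Finset.range M, d j + ∑' k, d (k + M) := by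
      rw [hχdef]
      simp only
      rw [← Summable.tsum_sub (hgsum ω) (hgsum ω')]
      exact (Summable.sum_add_tsum_nat_add M hdsum).symm
    -- geometric sum bound
    have hgeomsum : ∀ n : ℕ, ∑ k ∈ Finset.range n, θ ^ k ≤ (1 - θ)⁻¹ := by
      intro n
      calc ∑ k ∈ Finset.range n, θ ^ k ≤ ∑' k : ℕ, θ ^ k :=
            Summable.sum_le_tsum _ (fun k _ => by positivity)
              (summable_geometric_of_lt_one hθ0.le hθ1)
        _ = (1 - θ)⁻¹ := hsum_geom
    have hpart1 : |∑ j ∈ Finset.range M, d j| ≤ 2 * C * (1 - θ)⁻¹ * θ ^ (N - M + 1) := by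
      calc |∑ j ∈ Finset.range M, d j| ≤ ∑ j ∈ Finset.range M, |d j| :=
            Finset.abs_sum_le_sum_abs _ _
        _ ≤ ∑ j ∈ Finset.range M, 2 * C * θ ^ (N - M + 1) * θ ^ (M - 1 - j) := by
            refine Finset.sum_le_sum fun j hj => ?_
            rw [Finset.mem_range] at hj
            have heq : θ ^ (N - M + 1) * θ ^ (M - 1 - j) = θ ^ (N - j) := by
              rw [← pow_add]
              congr 1
              omega
            rw [mul_assoc, heq]
            exact hd1 j hj
        _ = 2 * C * θ ^ (N - M + 1) * ∑ j ∈ Finset.range M, θ ^ (M - 1 - j) := by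
            rw [Finset.mul_sum]
        _ = 2 * C * θ ^ (N - M + 1) * ∑ j ∈ Finset.range M, θ ^ j := by
            rw [Finset.sum_range_reflect (fun k => θ ^ k) M]
        _ ≤ 2 * C * θ ^ (N - M + 1) * (1 - θ)⁻¹ := by
            refine mul_le_mul_of_nonneg_left (hgeomsum M) (by positivity)
        _ = 2 * C * (1 - θ)⁻¹ * θ ^ (N - M + 1) := by ring
    have hpart2 : |∑' k, d (k + M)| ≤ 2 * C * (1 - θ)⁻¹ * θ ^ (M + 1) := by
      have hsum2 : Summable (fun k => d (k + M)) := (summable_nat_add_iff M).mpr hdsum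
      have hbnd : Summable (fun k : ℕ => 2 * C * θ ^ (M + 1) * θ ^ k) :=
        (summable_geometric_of_lt_one hθ0.le hθ1).mul_left _
      calc |∑' k, d (k + M)| ≤ ∑' k, |d (k + M)| := by
            simpa [Real.norm_eq_abs] using norm_tsum_le_tsum_norm hsum2.norm
        _ ≤ ∑' k : ℕ, 2 * C * θ ^ (M + 1) * θ ^ k := by
            refine Summable.tsum_le_tsum (fun k => ?_) hsum2.abs hbnd
            calc |d (k + M)| ≤ 2 * C * θ ^ (k + M + 1) := hd2 (k + M)
              _ = 2 * C * θ ^ (M + 1) * θ ^ k := by rw [show k + M + 1 = (M+1) + k by omega, pow_add]; ring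
        _ = 2 * C * θ ^ (M + 1) * (1 - θ)⁻¹ := by rw [tsum_mul_left, hsum_geom]
        _ = 2 * C * (1 - θ)⁻¹ * θ ^ (M + 1) := by ring
    have hp1 : θ ^ (N - M + 1) ≤ t ^ N := hpow _ _ (by omega)
    have hp2 : θ ^ (M + 1) ≤ t ^ N := hpow _ _ (by omega)
    calc |χ ω - χ ω'| = |∑ j ∈ Finset.range M, d j + ∑' k, d (k + M)| := by rw [hsplit]
      _ ≤ |∑ j ∈ Finset.range M, d j| + |∑' k, d (k + M)| := abs_add_le _ _
      _ ≤ 2 * C * (1 - θ)⁻¹ * θ ^ (N - M + 1) + 2 * C * (1 - θ)⁻¹ * θ ^ (M + 1) :=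
          add_le_add hpart1 hpart2
      _ ≤ 2 * C * (1 - θ)⁻¹ * t ^ N + 2 * C * (1 - θ)⁻¹ * t ^ N :=
          add_le_add (mul_le_mul_of_nonneg_left hp1 (by positivity))
            (mul_le_mul_of_nonneg_left hp2 (by positivity))
      _ = K * t ^ N := by rw [hKdef]; ring
  -- βt
  set βt : Seq2 → ℝ := fun ω => β ω - χ ω + χ (shift2 ω) with hβtdef
  have hcohom : ∀ ω, β ω = βt ω + χ ω - χ (shift2 ω) := by
    intro ω; rw [hβtdef]; ring
  -- χ ∘ shift variation
  have hχσvar : ∀ N, 1 ≤ N → ∀ ω ω', Agree2 N ω ω' →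
      |χ (shift2 ω) - χ (shift2 ω')| ≤ ((K + 2 * S) / t) * t ^ N := by
    intro N hN ω ω' hag
    have hagσ : Agree2 (N - 1) (shift2 ω) (shift2 ω') := by
      have := agree2_shift 1 hag
      simpa using this
    rcases Nat.lt_or_ge N 2 with h2 | h2
    · have hNe : N = 1 := by omega
      subst hNe
      calc |χ (shift2 ω) - χ (shift2 ω')| ≤ |χ (shift2 ω)| + |χ (shift2 ω')| := abs_sub _ _
        _ ≤ S + S := add_le_add (hχsup _) (hχsup _)
        _ ≤ ((K + 2 * S) / t) * t ^ 1 := by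
            rw [pow_one, div_mul_cancel₀ _ ht0.ne']
            linarith
    · have h1 : |χ (shift2 ω) - χ (shift2 ω')| ≤ K * t ^ (N - 1) :=
        hχvar (N - 1) (by omega) _ _ hagσ
      calc |χ (shift2 ω) - χ (shift2 ω')| ≤ K * t ^ (N - 1) := h1
        _ ≤ (K + 2 * S) * t ^ (N - 1) := by
            refine mul_le_mul_of_nonneg_right (by linarith) (by positivity)
        _ = ((K + 2 * S) / t) * t ^ N := by
            have htN : t ^ N = t * t ^ (N - 1) := by
              conv_lhs => rw [show N = 1 + (N - 1) by omega]
              rw [pow_add, pow_one]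
            rw [htN]
            field_simp
  -- βt bounds
  have hβtsup : ∀ ω, |βt ω| ≤ B + S + S := by
    intro ω
    rw [hβtdef]
    calc |β ω - χ ω + χ (shift2 ω)| ≤ |β ω - χ ω| + |χ (shift2 ω)| := abs_add_le _ _
      _ ≤ (|β ω| + |χ ω|) + |χ (shift2 ω)| := add_le_add (abs_sub _ _) le_rfl
      _ ≤ (B + S) + S := add_le_add (add_le_add (hβsup ω) (hχsup ω)) (hχsup _)
      _ = B + S + S := by ring
  have hβtvar : ∀ N, 1 ≤ N → ∀ ω ω', Agree2 N ω ω' →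
      |βt ω - βt ω'| ≤ (C + K + (K + 2 * S) / t) * t ^ N := by
    intro N hN ω ω' hag
    have h1 : |β ω - β ω'| ≤ C * t ^ N := by
      calc |β ω - β ω'| ≤ C * θ ^ N := hβvar N hN ω ω' hag
        _ ≤ C * t ^ N := by
            refine mul_le_mul_of_nonneg_left (pow_le_pow_left₀ hθ0.le hθt N) hC0
    have h2 := hχvar N hN ω ω' hag
    have h3 := hχσvar N hN ω ω' hag
    calc |βt ω - βt ω'| = |(β ω - β ω') - (χ ω - χ ω') + (χ (shift2 ω) - χ (shift2 ω'))| := by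
          rw [hβtdef]; ring_nf
      _ ≤ |(β ω - β ω') - (χ ω - χ ω')| + |χ (shift2 ω) - χ (shift2 ω')| := abs_add_le _ _
      _ ≤ (|β ω - β ω'| + |χ ω - χ ω'|) + |χ (shift2 ω) - χ (shift2 ω')| :=
          add_le_add (abs_sub _ _) le_rfl
      _ ≤ (C * t ^ N + K * t ^ N) + ((K + 2 * S) / t) * t ^ N :=
          add_le_add (add_le_add h1 h2) h3
      _ = (C + K + (K + 2 * S) / t) * t ^ N := by ring
  -- DependsOnNonneg
  have hdep : DependsOnNonneg βt := by
    intro ω ω' hagree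
    have hψ : psiMap ω = psiMap ω' := by
      funext k
      unfold psiMap
      by_cases h0 : 0 ≤ k
      · simp only [if_pos h0]; exact hagree k h0
      · simp only [if_neg h0]
    have hψσ : psiMap (shift2 ω) = psiMap (shift2 ω') := by
      funext k
      unfold psiMap shift2
      by_cases h0 : 0 ≤ k
      · simp only [if_pos h0]; exact hagree (k + 1) (by omega)
      · simp only [if_neg h0]
    set a : ℕ → ℝ := fun j => β (shift2^[j] ω) - β (shift2^[j] ω') with hadef
    have haN : ∀ j, |a j| ≤ C * θ ^ (j + 1) :=
      fun j => hβvar (j + 1) (by omega) _ _ (agree2_of_nonneg_agree hagree j)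
    have hasum : Summable a := by
      refine Summable.of_norm_bounded hgeom fun j => ?_
      simpa [Real.norm_eq_abs] using haN j
    have hχeq : χ ω - χ ω' = ∑' j, a j := by
      rw [hχdef]
      simp only
      rw [← Summable.tsum_sub (hgsum ω) (hgsum ω')]
      refine tsum_congr fun j => ?_
      rw [hgdef]
      simp only
      rw [hψ, hadef]
      ring
    have hχσeq : χ (shift2 ω) - χ (shift2 ω') = ∑' j, a (j + 1) := by
      rw [hχdef]
      simp only
      rw [← Summable.tsum_sub (hgsum (shift2 ω)) (hgsum (shift2 ω'))]
      refine tsum_congr fun j => ?_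
      rw [hgdef]
      simp only
      rw [hψσ, ← Function.iterate_succ_apply, ← Function.iterate_succ_apply, hadef]
      ring
    have hkey : ∑' j, a j = a 0 + ∑' j, a (j + 1) := Summable.tsum_eq_zero_add hasum
    have : βt ω - βt ω' = 0 := by
      have hexp : βt ω - βt ω' =
          a 0 - (χ ω - χ ω') + (χ (shift2 ω) - χ (shift2 ω')) := by
        rw [hβtdef, hadef]
        simp only [Function.iterate_zero, id]
        ring
      rw [hexp, hχeq, hχσeq, hkey]
      ring
    linarith [this]
  refine ⟨βt, χ, ?_, ?_, hdep, hcohom⟩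
  · exact holder2_of_bounds ht0 (by positivity) hβtsup
      (fun N ω ω' hN hag => hβtvar N hN ω ω' hag)
  · exact holder2_of_bounds ht0 (by positivity) hχsup
      (fun N ω ω' hN hag => hχvar N hN ω ω' hag)
end

section
/- Let (X_j)_{j ≥ 1} be real random variables on (Σ, μ) such that |X_j| ≤ M for all j and |∫_Σ X_i X_j dμ| ≤ C₀ r₀^{j−i} for all 1 ≤ i ≤ j, for some constants M, C₀ > 0 and r₀ ∈ (0,1). Set S_n = Σ_{j=1}^{n} X_j and σ_n² = ∫_Σ S_n² dμ, and assume σ_n² ≥ σ_-² n for some σ_- > 0 and all large n. Fix τ ∈ (0,1) and, for each n, set p = ⌊n^τ⌋, q = ⌈(log n)²⌉, k = ⌊n/(p+q)⌋, ξ_j = Σ_{m = jp+jq+1}^{(j+1)p+jq} X_m for 0 ≤ j ≤ k−1, and S̃_n = Σ_{j=0}^{k−1} ξ_j. Then for every t ∈ ℝ, |∫_Σ e^{i t S_n/σ_n} dμ − ∫_Σ e^{i t S̃_n/σ_n} dμ| → 0 as n → ∞. -/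
open MeasureTheory Filter Topology
open scoped ENNReal BoundedContinuousFunction

/-- Partial sum `S_n = Σ_{j=1}^n X_j`. -/
noncomputable def Sn (X : ℕ → Seq2 → ℝ) (n : ℕ) (ω : Seq2) : ℝ :=
  ∑ j ∈ Finset.Icc 1 n, X j ω

/-- Block length `p = ⌊n^τ⌋`. -/
noncomputable def blockP (τ : ℝ) (n : ℕ) : ℕ := Nat.floor ((n : ℝ) ^ τ)

/-- Gap length `q = ⌈(log n)²⌉`. -/
noncomputable def blockQ (n : ℕ) : ℕ := Nat.ceil (Real.log n ^ 2)

/-- Number of blocks `k = ⌊n/(p+q)⌋`. -/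
noncomputable def blockK (τ : ℝ) (n : ℕ) : ℕ := n / (blockP τ n + blockQ n)

/-- The `j`-th Bernstein block `ξ_j = Σ_{m=jp+jq+1}^{(j+1)p+jq} X_m`. -/
noncomputable def xiBlock (X : ℕ → Seq2 → ℝ) (τ : ℝ) (n j : ℕ) (ω : Seq2) : ℝ :=
  ∑ m ∈ Finset.Icc (j * blockP τ n + j * blockQ n + 1)
      ((j + 1) * blockP τ n + j * blockQ n), X m ω

/-- The block sum `S̃_n = Σ_{j=0}^{k-1} ξ_j`. -/
noncomputable def Stil (X : ℕ → Seq2 → ℝ) (τ : ℝ) (n : ℕ) (ω : Seq2) : ℝ :=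
  ∑ j ∈ Finset.range (blockK τ n), xiBlock X τ n j ω

/-- `σ_n = (∫ S_n² dμ)^{1/2}`. -/
noncomputable def sigman (μ : MeasureTheory.Measure Seq2) (X : ℕ → Seq2 → ℝ)
    (n : ℕ) : ℝ :=
  Real.sqrt (∫ ω, (Sn X n ω) ^ 2 ∂μ)


section Statement14Helpers

open MeasureTheory Filter Topology

lemma helper_exp_bound (x : ℝ) :
    ‖Complex.exp (Complex.I * x) - 1‖ ≤ |x| := by
  have h1 : Complex.I * (x:ℂ) = (x:ℂ) * Complex.I := by ring
  rw [h1, Complex.exp_mul_I]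
  have h2 : Complex.cos (x:ℂ) + Complex.sin (x:ℂ) * Complex.I - 1
      = ((Real.cos x - 1 : ℝ) : ℂ) + ((Real.sin x : ℝ) : ℂ) * Complex.I := by
    push_cast [Complex.ofReal_cos, Complex.ofReal_sin]; ring
  rw [h2, Complex.norm_add_mul_I]
  have hsin : Real.sin (x/2) ^ 2 ≤ (x/2) ^ 2 := by
    have h := Real.abs_sin_le_abs (x := x/2)
    have := pow_le_pow_left₀ (abs_nonneg _) h 2
    simpa [sq_abs] using this
  have hcos : Real.cos x = 1 - 2 * Real.sin (x/2) ^ 2 := by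
    have hc := Real.cos_two_mul' (x/2)
    have hp := Real.sin_sq_add_cos_sq (x/2)
    have hx : 2 * (x/2) = x := by ring
    rw [hx] at hc; linarith
  have hle : (Real.cos x - 1) ^ 2 + Real.sin x ^ 2 ≤ x ^ 2 := by
    have hp2 := Real.sin_sq_add_cos_sq x
    nlinarith [hsin, sq_nonneg (Real.sin (x/2))]
  calc Real.sqrt ((Real.cos x - 1) ^ 2 + Real.sin x ^ 2)
      ≤ Real.sqrt (x ^ 2) := Real.sqrt_le_sqrt hle
    _ = |x| := Real.sqrt_sq_eq_abs x

lemma helper_L1_le_L2 {α : Type*} [MeasurableSpace α] {μ : Measure α} [IsProbabilityMeasure μ]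
    (f : α → ℝ) (hf : Integrable f μ) (hf2 : Integrable (fun ω => f ω ^ 2) μ) :
    ∫ ω, |f ω| ∂μ ≤ Real.sqrt (∫ ω, f ω ^ 2 ∂μ) := by
  set a := ∫ ω, |f ω| ∂μ with ha
  have ha0 : 0 ≤ a := integral_nonneg fun ω => abs_nonneg _
  have habs : Integrable (fun ω => |f ω|) μ := hf.abs
  have hkey : 0 ≤ ∫ ω, (|f ω| - a) ^ 2 ∂μ := integral_nonneg fun ω => sq_nonneg _
  have hexp : ∫ ω, (|f ω| - a) ^ 2 ∂μ = (∫ ω, f ω ^ 2 ∂μ) - a ^ 2 := by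
    have hpt : (fun ω => (|f ω| - a) ^ 2)
        = fun ω => f ω ^ 2 - (2 * a) * |f ω| + a ^ 2 := by
      funext ω; rw [sub_sq, sq_abs]; ring
    have hint1 : Integrable (fun ω => f ω ^ 2 - (2 * a) * |f ω|) μ :=
      hf2.sub (habs.const_mul _)
    rw [hpt, integral_add hint1 (integrable_const _),
      integral_sub hf2 (habs.const_mul _), MeasureTheory.integral_const_mul, integral_const]
    simp [← ha]; ring
  have hsq : a ^ 2 ≤ ∫ ω, f ω ^ 2 ∂μ := by linarith [hkey, hexp.symm.le, hexp.le]
  have := Real.sqrt_le_sqrt hsq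
  calc a = Real.sqrt (a ^ 2) := (Real.sqrt_sq ha0).symm
    _ ≤ Real.sqrt (∫ ω, f ω ^ 2 ∂μ) := this

lemma helper_geom {r : ℝ} (h0 : 0 ≤ r) (h1 : r < 1) (s : Finset ℕ) (g : ℕ → ℕ)
    (hinj : Set.InjOn g s) :
    ∑ j ∈ s, r ^ (g j) ≤ (1 - r)⁻¹ := by
  rw [← Finset.sum_image (fun a ha b hb hab => hinj ha hb hab)]
  exact sum_le_hasSum _ (fun i _ => pow_nonneg h0 i) (hasSum_geometric_of_lt_one h0 h1)

lemma helper_int {α : Type*} [MeasurableSpace α] {μ : Measure α} [IsFiniteMeasure μ]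
    {f : α → ℝ} (hm : Measurable f) {C : ℝ} (h : ∀ ω, |f ω| ≤ C) : Integrable f μ :=
  Integrable.mono' (integrable_const C) hm.aestronglyMeasurable
    (ae_of_all _ fun ω => by simpa using h ω)

lemma helper_intC {α : Type*} [MeasurableSpace α] {μ : Measure α} [IsFiniteMeasure μ]
    {f : α → ℂ} (hm : Measurable f) {C : ℝ} (h : ∀ ω, ‖f ω‖ ≤ C) : Integrable f μ :=
  Integrable.mono' (integrable_const C) hm.aestronglyMeasurable (ae_of_all _ h)

lemma gap_lemma (X : ℕ → Seq2 → ℝ) (τ : ℝ) (n : ℕ) :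
    ∃ R : Finset ℕ, R ⊆ Finset.Icc 1 n ∧
      R.card = n - blockK τ n * blockP τ n ∧
      ∀ ω, (∑ m ∈ R, X m ω) = Sn X n ω - Stil X τ n ω := by
  set p := blockP τ n with hp
  set q := blockQ n with hq
  set k := blockK τ n with hk
  set B : ℕ → Finset ℕ := fun j => Finset.Icc (j * p + j * q + 1) ((j + 1) * p + j * q) with hB
  have hkpq : k * (p + q) ≤ n := Nat.div_mul_le_self n (p + q)
  have hsub : ∀ j ∈ Finset.range k, B j ⊆ Finset.Icc 1 n := by
    intro j hj m hm
    rw [Finset.mem_Icc] at hm ⊢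
    have hj' : j + 1 ≤ k := Finset.mem_range.mp hj
    have h1 : (j + 1) * (p + q) ≤ k * (p + q) := Nat.mul_le_mul_right _ hj'
    have h2 : (j + 1) * (p + q) = (j + 1) * p + j * q + q := by ring
    omega
  have hdisj : (Finset.range k : Set ℕ).PairwiseDisjoint B := by
    have haux : ∀ i j : ℕ, i < j → Disjoint (B i) (B j) := by
      intro i j hij
      rw [Finset.disjoint_left]
      intro m hmi hmj
      rw [hB, Finset.mem_Icc] at hmi hmj
      have h1 : (i + 1) * p ≤ j * p := Nat.mul_le_mul_right _ hij
      have h2 : i * q ≤ j * q := Nat.mul_le_mul_right _ hij.le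
      have h3 : (i + 1) * p = i * p + p := by ring
      omega
    intro i _ j _ hij
    rcases Nat.lt_or_ge i j with h | h
    · exact haux i j h
    · exact (haux j i (by omega)).symm
  have hUsub : (Finset.range k).biUnion B ⊆ Finset.Icc 1 n := by
    intro m hm
    obtain ⟨j, hj, hmj⟩ := Finset.mem_biUnion.mp hm
    exact hsub j hj hmj
  refine ⟨Finset.Icc 1 n \ (Finset.range k).biUnion B, Finset.sdiff_subset, ?_, ?_⟩
  · rw [Finset.card_sdiff_of_subset hUsub, Finset.card_biUnion hdisj, Nat.card_Icc]
    have hcardB : ∀ j, (B j).card = p := by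
      intro j
      rw [hB, Nat.card_Icc]
      have : (j + 1) * p = j * p + p := by ring
      omega
    simp only [hcardB, Finset.sum_const, Finset.card_range, smul_eq_mul]
    omega
  · intro ω
    rw [Finset.sum_sdiff_eq_sub hUsub]
    have : Stil X τ n ω = ∑ m ∈ (Finset.range k).biUnion B, X m ω := by
      rw [Finset.sum_biUnion hdisj]; rfl
    rw [Sn, this]

lemma cov_bound {α : Type*} [MeasurableSpace α] (μ : Measure α) [IsProbabilityMeasure μ]
    (X : ℕ → α → ℝ) (hmeas : ∀ j, Measurable (X j))
    (M : ℝ) (hbd : ∀ j : ℕ, 1 ≤ j → ∀ ω, |X j ω| ≤ M)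
    (C₀ : ℝ) (hC₀ : 0 < C₀) (r₀ : ℝ) (hr₀ : r₀ ∈ Set.Ioo (0 : ℝ) 1)
    (hcov : ∀ i j : ℕ, 1 ≤ i → i ≤ j →
      |∫ ω, X i ω * X j ω ∂μ| ≤ C₀ * r₀ ^ (j - i))
    (n : ℕ) (R : Finset ℕ) (hR : R ⊆ Finset.Icc 1 n) :
    ∫ ω, (∑ m ∈ R, X m ω) ^ 2 ∂μ ≤ 2 * C₀ / (1 - r₀) * R.card := by
  have hR1 : ∀ m ∈ R, 1 ≤ m := fun m hm => (Finset.mem_Icc.mp (hR hm)).1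
  have hprod : ∀ i ∈ R, ∀ j ∈ R, Integrable (fun ω => X i ω * X j ω) μ := by
    intro i hi j hj
    refine helper_int ((hmeas i).mul (hmeas j)) (C := M * M) fun ω => ?_
    rw [abs_mul]
    have h1 := hbd i (hR1 i hi) ω
    have h2 := hbd j (hR1 j hj) ω
    exact mul_le_mul h1 h2 (abs_nonneg _) ((abs_nonneg _).trans h1)
  have hsq : ∫ ω, (∑ m ∈ R, X m ω) ^ 2 ∂μ
      = ∑ i ∈ R, ∑ j ∈ R, ∫ ω, X i ω * X j ω ∂μ := by
    have hpt : (fun ω => (∑ m ∈ R, X m ω) ^ 2)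
        = fun ω => ∑ i ∈ R, ∑ j ∈ R, X i ω * X j ω := by
      funext ω; rw [sq, Finset.sum_mul_sum]
    rw [hpt, integral_finset_sum R fun i hi =>
      integrable_finset_sum R fun j hj => hprod i hi j hj]
    exact Finset.sum_congr rfl fun i hi =>
      integral_finset_sum R fun j hj => hprod i hi j hj
  rw [hsq]
  have hpair : ∀ i ∈ R, ∀ j ∈ R, |∫ ω, X i ω * X j ω ∂μ|
      ≤ C₀ * r₀ ^ (if i ≤ j then j - i else i - j) := by
    intro i hi j hj
    by_cases h : i ≤ j
    · rw [if_pos h]; exact hcov i j (hR1 i hi) h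
    · rw [if_neg h]
      have : ∫ ω, X i ω * X j ω ∂μ = ∫ ω, X j ω * X i ω ∂μ := by
        congr 1; funext ω; ring
      rw [this]
      exact hcov j i (hR1 j hj) (by omega)
  have hrow : ∀ i ∈ R, ∑ j ∈ R, |∫ ω, X i ω * X j ω ∂μ| ≤ 2 * C₀ / (1 - r₀) := by
    intro i hi
    have step1 : ∑ j ∈ R, |∫ ω, X i ω * X j ω ∂μ|
        ≤ ∑ j ∈ R, C₀ * r₀ ^ (if i ≤ j then j - i else i - j) :=
      Finset.sum_le_sum fun j hj => hpair i hi j hj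
    have step2 : ∑ j ∈ R, C₀ * r₀ ^ (if i ≤ j then j - i else i - j)
        = C₀ * (∑ j ∈ R.filter (fun j => i ≤ j), r₀ ^ (j - i)) +
            C₀ * ∑ j ∈ R.filter (fun j => ¬ i ≤ j), r₀ ^ (i - j) := by
      rw [← Finset.sum_filter_add_sum_filter_not R (fun j => i ≤ j)
        (fun j => C₀ * r₀ ^ (if i ≤ j then j - i else i - j)),
        Finset.mul_sum, Finset.mul_sum]
      congr 1
      · exact Finset.sum_congr rfl fun j hj => by
          rw [if_pos (Finset.mem_filter.mp hj).2]
      · exact Finset.sum_congr rfl fun j hj => by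
          rw [if_neg (Finset.mem_filter.mp hj).2]
    have g1 : ∑ j ∈ R.filter (fun j => i ≤ j), r₀ ^ (j - i) ≤ (1 - r₀)⁻¹ := by
      refine helper_geom hr₀.1.le hr₀.2 _ (fun j => j - i) ?_
      intro a ha b hb hab
      simp only [Finset.coe_filter, Set.mem_setOf_eq] at ha hb
      dsimp only at hab
      omega
    have g2 : ∑ j ∈ R.filter (fun j => ¬ i ≤ j), r₀ ^ (i - j) ≤ (1 - r₀)⁻¹ := by
      refine helper_geom hr₀.1.le hr₀.2 _ (fun j => i - j) ?_
      intro a ha b hb hab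
      simp only [Finset.coe_filter, Set.mem_setOf_eq] at ha hb
      dsimp only at hab
      omega
    calc ∑ j ∈ R, |∫ ω, X i ω * X j ω ∂μ|
        ≤ C₀ * (∑ j ∈ R.filter (fun j => i ≤ j), r₀ ^ (j - i)) +
            C₀ * ∑ j ∈ R.filter (fun j => ¬ i ≤ j), r₀ ^ (i - j) := step2 ▸ step1
      _ ≤ C₀ * (1 - r₀)⁻¹ + C₀ * (1 - r₀)⁻¹ :=
          add_le_add (mul_le_mul_of_nonneg_left g1 hC₀.le)
            (mul_le_mul_of_nonneg_left g2 hC₀.le)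
      _ = 2 * C₀ / (1 - r₀) := by ring
  calc ∑ i ∈ R, ∑ j ∈ R, ∫ ω, X i ω * X j ω ∂μ
      ≤ ∑ i ∈ R, ∑ j ∈ R, |∫ ω, X i ω * X j ω ∂μ| :=
        Finset.sum_le_sum fun i _ => Finset.sum_le_sum fun j _ => le_abs_self _
    _ ≤ ∑ _i ∈ R, 2 * C₀ / (1 - r₀) := Finset.sum_le_sum hrow
    _ = 2 * C₀ / (1 - r₀) * R.card := by
        rw [Finset.sum_const, nsmul_eq_mul, mul_comm]

lemma char_bound {α : Type*} [MeasurableSpace α] (μ : Measure α) [IsProbabilityMeasure μ]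
    (S T : α → ℝ) (hS : Measurable S) (hT : Measurable T)
    (hint : Integrable (fun ω => S ω - T ω) μ) (t σ : ℝ) (hσ : 0 < σ) :
    ‖(∫ ω, Complex.exp (Complex.I * t * S ω / σ) ∂μ) -
        ∫ ω, Complex.exp (Complex.I * t * T ω / σ) ∂μ‖
      ≤ |t| / σ * ∫ ω, |S ω - T ω| ∂μ := by
  have hnorm1 : ∀ x : ℝ, ‖Complex.exp (Complex.I * t * x / σ)‖ = 1 := by
    intro x
    have : Complex.I * t * x / σ = ((t * x / σ : ℝ) : ℂ) * Complex.I := by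
      push_cast; ring
    rw [this]
    exact Complex.norm_exp_ofReal_mul_I _
  have hmf : ∀ (U : α → ℝ), Measurable U →
      Measurable fun ω => Complex.exp (Complex.I * t * U ω / σ) := by
    intro U hU
    exact Complex.measurable_exp.comp
      (((Complex.measurable_ofReal.comp hU).const_mul (Complex.I * t)).div_const _)
  have hint1 : Integrable (fun ω => Complex.exp (Complex.I * t * S ω / σ)) μ :=
    helper_intC (hmf S hS) (C := 1) fun ω => (hnorm1 _).le
  have hint2 : Integrable (fun ω => Complex.exp (Complex.I * t * T ω / σ)) μ :=
    helper_intC (hmf T hT) (C := 1) fun ω => (hnorm1 _).le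
  have hpt : ∀ ω, ‖Complex.exp (Complex.I * t * S ω / σ) -
      Complex.exp (Complex.I * t * T ω / σ)‖ ≤ |t| / σ * |S ω - T ω| := by
    intro ω
    have hdec : Complex.I * t * S ω / σ
        = Complex.I * t * T ω / σ + Complex.I * ((t * (S ω - T ω) / σ : ℝ) : ℂ) := by
      push_cast; ring
    have heq : Complex.exp (Complex.I * t * S ω / σ) -
        Complex.exp (Complex.I * t * T ω / σ)
        = Complex.exp (Complex.I * t * T ω / σ) *
            (Complex.exp (Complex.I * ((t * (S ω - T ω) / σ : ℝ) : ℂ)) - 1) := by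
      rw [hdec, Complex.exp_add]; ring
    rw [heq, norm_mul, hnorm1, one_mul]
    calc ‖Complex.exp (Complex.I * ((t * (S ω - T ω) / σ : ℝ) : ℂ)) - 1‖
        ≤ |t * (S ω - T ω) / σ| := helper_exp_bound _
      _ = |t| / σ * |S ω - T ω| := by
          rw [abs_div, abs_mul, abs_of_pos hσ]; ring
  calc ‖(∫ ω, Complex.exp (Complex.I * t * S ω / σ) ∂μ) -
        ∫ ω, Complex.exp (Complex.I * t * T ω / σ) ∂μ‖
      = ‖∫ ω, (Complex.exp (Complex.I * t * S ω / σ) -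
            Complex.exp (Complex.I * t * T ω / σ)) ∂μ‖ := by
        rw [integral_sub hint1 hint2]
    _ ≤ ∫ ω, ‖Complex.exp (Complex.I * t * S ω / σ) -
            Complex.exp (Complex.I * t * T ω / σ)‖ ∂μ := norm_integral_le_integral_norm _
    _ ≤ ∫ ω, |t| / σ * |S ω - T ω| ∂μ :=
        integral_mono ((hint1.sub hint2).norm) ((hint.abs).const_mul _) hpt
    _ = |t| / σ * ∫ ω, |S ω - T ω| ∂μ := MeasureTheory.integral_const_mul _ _

lemma tendsto_E_aux {τ : ℝ} (hτ : τ ∈ Set.Ioo (0 : ℝ) 1) :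
    Tendsto (fun n : ℕ => 2 * ((Real.log n) ^ 2 + 1) / (n : ℝ) ^ τ +
      ((n : ℝ) ^ τ + ((Real.log n) ^ 2 + 1)) / n) atTop (𝓝 0) := by
  obtain ⟨hτ0, hτ1⟩ := hτ
  have A1 : Tendsto (fun x : ℝ => (Real.log x) ^ 2 / x ^ τ) atTop (𝓝 0) := by
    have h := (isLittleO_log_rpow_rpow_atTop ((2 : ℕ) : ℝ) hτ0).tendsto_div_nhds_zero
    exact h.congr fun x => by rw [Real.rpow_natCast]
  have A2 : Tendsto (fun x : ℝ => 1 / x ^ τ) atTop (𝓝 0) := by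
    have h := tendsto_rpow_neg_atTop hτ0
    refine h.congr' ?_
    filter_upwards [eventually_ge_atTop (0:ℝ)] with x hx
    rw [Real.rpow_neg hx, one_div]
  have A3 : Tendsto (fun x : ℝ => x ^ τ / x) atTop (𝓝 0) := by
    have h := tendsto_rpow_neg_atTop (show (0:ℝ) < 1 - τ by linarith)
    refine h.congr' ?_
    filter_upwards [eventually_gt_atTop (0:ℝ)] with x hx
    rw [neg_sub, Real.rpow_sub hx, Real.rpow_one]
  have A4 : Tendsto (fun x : ℝ => (Real.log x) ^ 2 / x) atTop (𝓝 0) := by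
    have h := (isLittleO_log_rpow_rpow_atTop ((2 : ℕ) : ℝ)
      one_pos).tendsto_div_nhds_zero
    exact h.congr fun x => by rw [Real.rpow_natCast, Real.rpow_one]
  have A5 : Tendsto (fun x : ℝ => 1 / x) atTop (𝓝 0) := by
    simpa [one_div] using (tendsto_inv_atTop_zero (𝕜 := ℝ))
  have hF : Tendsto (fun x : ℝ => 2 * ((Real.log x) ^ 2 + 1) / x ^ τ +
      (x ^ τ + ((Real.log x) ^ 2 + 1)) / x) atTop (𝓝 0) := by
    have h := (((A1.const_mul (2:ℝ)).add (A2.const_mul (2:ℝ))).add (A3.add (A4.add A5)))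
    simp only [mul_zero, add_zero] at h
    exact h.congr fun x => by ring
  have := hF.comp (tendsto_natCast_atTop_atTop (R := ℝ))
  exact this.congr fun n => rfl

end Statement14Helpers

/-- Bernstein block method, step 1: for bounded random variables with
exponentially decaying correlations and nondegenerate variance, removing the gap blocks
does not change the limit of the characteristic functions. -/
theorem statement14
    (μ : Measure Seq2) (hμ : IsBernoulli2 μ)
    (X : ℕ → Seq2 → ℝ) (hmeas : ∀ j, Measurable (X j))
    (M : ℝ) (hM : 0 < M) (hbd : ∀ j : ℕ, 1 ≤ j → ∀ ω, |X j ω| ≤ M)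
    (C₀ : ℝ) (hC₀ : 0 < C₀) (r₀ : ℝ) (hr₀ : r₀ ∈ Set.Ioo (0 : ℝ) 1)
    (hcov : ∀ i j : ℕ, 1 ≤ i → i ≤ j →
      |∫ ω, X i ω * X j ω ∂μ| ≤ C₀ * r₀ ^ (j - i))
    (σm : ℝ) (hσm : 0 < σm)
    (hvar : ∀ᶠ n : ℕ in atTop, σm ^ 2 * n ≤ ∫ ω, (Sn X n ω) ^ 2 ∂μ)
    (τ : ℝ) (hτ : τ ∈ Set.Ioo (0 : ℝ) 1) (t : ℝ) :
    Tendsto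
      (fun n : ℕ =>
        Norm.norm
          ((∫ ω, Complex.exp (Complex.I * (t : ℂ) * (Sn X n ω : ℂ) / (sigman μ X n : ℂ)) ∂μ) -
            ∫ ω, Complex.exp (Complex.I * (t : ℂ) * (Stil X τ n ω : ℂ) / (sigman μ X n : ℂ)) ∂μ))
      atTop (𝓝 0) :=  by
  classical
  haveI : IsProbabilityMeasure μ := hμ.1
  obtain ⟨hτ0, hτ1⟩ := hτ
  set C₁ : ℝ := 2 * C₀ / (1 - r₀) with hC₁
  have hr01 : (0:ℝ) < 1 - r₀ := by have := hr₀.2; linarith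
  have hC₁pos : 0 < C₁ := div_pos (by linarith) hr01
  set e : ℕ → ℝ := fun n => ((n - blockK τ n * blockP τ n : ℕ) : ℝ) / n with he
  have he0 : ∀ n, 0 ≤ e n := fun n => div_nonneg (Nat.cast_nonneg _) (Nat.cast_nonneg _)
  -- `e n → 0`
  have hrpow : Tendsto (fun n : ℕ => (n : ℝ) ^ τ) atTop atTop :=
    (tendsto_rpow_atTop hτ0).comp (tendsto_natCast_atTop_atTop (R := ℝ))
  have heE : ∀ᶠ n in atTop, e n ≤ 2 * ((Real.log n) ^ 2 + 1) / (n : ℝ) ^ τ +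
      ((n : ℝ) ^ τ + ((Real.log n) ^ 2 + 1)) / n := by
    filter_upwards [hrpow.eventually_ge_atTop 2, eventually_ge_atTop 1] with n h2 hn1
    set p := blockP τ n with hp
    set q := blockQ n with hq
    set k := blockK τ n with hk
    have hnR : (0:ℝ) < n := by exact_mod_cast hn1
    have hppos : 0 < p := Nat.le_floor (by push_cast; linarith : ((1:ℕ):ℝ) ≤ (n : ℝ) ^ τ)
    have hpreal : (n : ℝ) ^ τ / 2 ≤ (p : ℝ) := by
      have h1 := Nat.sub_one_lt_floor ((n : ℝ) ^ τ)
      have : (n : ℝ) ^ τ / 2 ≤ (n : ℝ) ^ τ - 1 := by linarith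
      rw [hp, blockP]
      linarith
    have hqreal : (q : ℝ) ≤ (Real.log n) ^ 2 + 1 := by
      rw [hq, blockQ]
      exact (Nat.ceil_lt_add_one (sq_nonneg _)).le
    have hkpq : k * (p + q) ≤ n := Nat.div_mul_le_self n (p + q)
    have hkp : k * p ≤ n := le_trans (Nat.mul_le_mul_left _ (by omega)) hkpq
    have hNat : n - k * p ≤ k * q + (p + q) := by
      have hd := Nat.div_add_mod n (p + q)
      have hm : n % (p + q) < p + q := Nat.mod_lt n (by omega)
      have hd' : k * p + k * q + n % (p + q) = n := by
        rw [← Nat.left_distrib, Nat.mul_comm]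
        exact hd
      omega
    have hppR : (0:ℝ) < (p : ℝ) := by exact_mod_cast hppos
    have step1 : e n ≤ ((k : ℝ) * q + ((p : ℝ) + q)) / n := by
      simp only [he]
      gcongr
      exact_mod_cast hNat
    have step2 : ((k : ℝ) * q + ((p : ℝ) + q)) / n
        = (k : ℝ) * q / n + ((p : ℝ) + q) / n := add_div _ _ _
    have step3 : (k : ℝ) * q / n ≤ (q : ℝ) / p := by
      rw [div_le_div_iff₀ hnR hppR]
      have hkpR : (k : ℝ) * p ≤ n := by exact_mod_cast hkp
      have hq0 : (0:ℝ) ≤ (q : ℝ) := Nat.cast_nonneg _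
      nlinarith
    have step4 : (q : ℝ) / p ≤ 2 * ((Real.log n) ^ 2 + 1) / (n : ℝ) ^ τ := by
      have h := div_le_div₀ (by positivity) hqreal (by linarith) hpreal
      have heq : ((Real.log n) ^ 2 + 1) / ((n : ℝ) ^ τ / 2)
          = 2 * ((Real.log n) ^ 2 + 1) / (n : ℝ) ^ τ := by
        rw [div_div_eq_mul_div]
        ring
      linarith [h, heq.le, heq.ge]
    have step5 : ((p : ℝ) + q) / n ≤ ((n : ℝ) ^ τ + ((Real.log n) ^ 2 + 1)) / n := by
      have hpfl : (p : ℝ) ≤ (n : ℝ) ^ τ := by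
        rw [hp, blockP]; exact Nat.floor_le (by positivity)
      gcongr
    calc e n ≤ ((k : ℝ) * q + ((p : ℝ) + q)) / n := step1
      _ = (k : ℝ) * q / n + ((p : ℝ) + q) / n := step2
      _ ≤ 2 * ((Real.log n) ^ 2 + 1) / (n : ℝ) ^ τ +
          ((n : ℝ) ^ τ + ((Real.log n) ^ 2 + 1)) / n :=
        add_le_add (step3.trans step4) step5
  have heto : Tendsto e atTop (𝓝 0) :=
    squeeze_zero' (Eventually.of_forall he0) heE (tendsto_E_aux ⟨hτ0, hτ1⟩)
  -- the bounding sequence tends to zero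
  have hgto : Tendsto (fun n => |t| / σm * Real.sqrt (C₁ * e n)) atTop (𝓝 0) := by
    have h1 : Tendsto (fun n => C₁ * e n) atTop (𝓝 0) := by
      simpa using heto.const_mul C₁
    have h2 : Tendsto (fun n => Real.sqrt (C₁ * e n)) atTop (𝓝 0) := by
      have := (Real.continuous_sqrt.tendsto 0).comp h1
      simpa [Function.comp_def] using this
    simpa using h2.const_mul (|t| / σm)
  -- main squeeze
  refine squeeze_zero' (Eventually.of_forall fun n => norm_nonneg _) ?_ hgto
  filter_upwards [hvar, eventually_ge_atTop 1] with n hv hn1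
  obtain ⟨R, hRsub, hRcard, hRsum⟩ := gap_lemma X τ n
  set σ := sigman μ X n with hσdef
  have hnR : (0:ℝ) < n := by exact_mod_cast hn1
  have hsqn : (0:ℝ) < Real.sqrt n := Real.sqrt_pos.mpr hnR
  have hσlow : σm * Real.sqrt n ≤ σ := by
    rw [hσdef, sigman]
    have : σm * Real.sqrt n = Real.sqrt (σm ^ 2 * n) := by
      rw [Real.sqrt_mul (sq_nonneg _), Real.sqrt_sq hσm.le]
    rw [this]
    exact Real.sqrt_le_sqrt hv
  have hσpos : 0 < σ := lt_of_lt_of_le (by positivity) hσlow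
  set D : Seq2 → ℝ := fun ω => ∑ m ∈ R, X m ω with hD
  have hDmeas : Measurable D := Finset.measurable_sum R fun i _ => hmeas i
  have hDbd : ∀ ω, |D ω| ≤ (R.card : ℝ) * M := by
    intro ω
    calc |D ω| ≤ ∑ m ∈ R, |X m ω| := Finset.abs_sum_le_sum_abs _ _
      _ ≤ ∑ m ∈ R, M := Finset.sum_le_sum fun m hm =>
          hbd m (Finset.mem_Icc.mp (hRsub hm)).1 ω
      _ = (R.card : ℝ) * M := by rw [Finset.sum_const, nsmul_eq_mul]
  have hDint : Integrable D μ := helper_int hDmeas hDbd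
  have hD2int : Integrable (fun ω => D ω ^ 2) μ := by
    refine helper_int (hDmeas.pow_const 2) (C := ((R.card : ℝ) * M) ^ 2) fun ω => ?_
    rw [abs_pow]
    exact pow_le_pow_left₀ (abs_nonneg _) (hDbd ω) 2
  have hSmeas : Measurable (Sn X n) := Finset.measurable_sum _ fun i _ => hmeas i
  have hTmeas : Measurable (Stil X τ n) := by
    apply Finset.measurable_sum
    intro j _
    exact Finset.measurable_sum _ fun i _ => hmeas i
  have hsubeq : (fun ω => Sn X n ω - Stil X τ n ω) = D := by
    funext ω; rw [← hRsum ω]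
  have hintsub : Integrable (fun ω => Sn X n ω - Stil X τ n ω) μ := by
    rw [hsubeq]; exact hDint
  have habs_eq : ∫ ω, |Sn X n ω - Stil X τ n ω| ∂μ = ∫ ω, |D ω| ∂μ := by
    congr 1
    funext ω
    rw [← hRsum ω]
  have hcb := char_bound μ (Sn X n) (Stil X τ n) hSmeas hTmeas hintsub t σ hσpos
  have hvar2 := cov_bound μ X hmeas M hbd C₀ hC₀ r₀ hr₀ hcov n R hRsub
  have hC₁R : (0:ℝ) ≤ C₁ * R.card := mul_nonneg hC₁pos.le (Nat.cast_nonneg _)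
  have heq_e : C₁ * e n = C₁ * (R.card : ℝ) / n := by
    simp only [he]
    rw [hRcard]
    ring
  have hsqrt_eq : Real.sqrt (C₁ * e n) = Real.sqrt (C₁ * (R.card : ℝ)) / Real.sqrt n := by
    rw [heq_e, Real.sqrt_div hC₁R]
  refine hcb.trans ?_
  calc |t| / σ * ∫ ω, |Sn X n ω - Stil X τ n ω| ∂μ
      = |t| / σ * ∫ ω, |D ω| ∂μ := by rw [habs_eq]
    _ ≤ |t| / σ * Real.sqrt (∫ ω, D ω ^ 2 ∂μ) :=
        mul_le_mul_of_nonneg_left (helper_L1_le_L2 D hDint hD2int) (by positivity)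
    _ ≤ |t| / σ * Real.sqrt (C₁ * R.card) := by
        apply mul_le_mul_of_nonneg_left (Real.sqrt_le_sqrt ?_) (by positivity)
        exact hvar2
    _ ≤ |t| / (σm * Real.sqrt n) * Real.sqrt (C₁ * R.card) := by
        apply mul_le_mul_of_nonneg_right ?_ (Real.sqrt_nonneg _)
        exact div_le_div_of_nonneg_left (abs_nonneg t) (by positivity) hσlow
    _ = |t| / σm * Real.sqrt (C₁ * e n) := by
        rw [hsqrt_eq]
        ring
end

section
/- Let (X_j)_{j ≥ 1} be real random variables on (Σ, μ) such that |X_j| ≤ M for all j, ∫_Σ X_j dμ = 0 for all j, and |∫_Σ X_i X_j dμ| ≤ C₀ r₀^{j−i} for all 1 ≤ i ≤ j, for some constants M, C₀ > 0 and r₀ ∈ (0,1). Set S_n = Σ_{j=1}^{n} X_j and σ_n² = ∫_Σ S_n² dμ, and assume σ_n² ≥ σ_-² n for some σ_- > 0 and all large n. Fix τ ∈ (0,1) and, for each n, set p = ⌊n^τ⌋, q = ⌈(log n)²⌉, k = ⌊n/(p+q)⌋, and ξ_j = Σ_{m = jp+jq+1}^{(j+1)p+jq} X_m for 0 ≤ j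 ≤ k−1. Then (Σ_{j=0}^{k−1} ∫_Σ ξ_j² dμ) / σ_n² → 1 as n → ∞. -/
open MeasureTheory Filter Topology
open scoped ENNReal BoundedContinuousFunction

lemma geo_sum {r : ℝ} (hr0 : 0 ≤ r) (hr1 : r < 1) (S : Finset ℕ) (g : ℕ → ℕ)
    (hg : Set.InjOn g S) : ∑ a ∈ S, r ^ g a ≤ (1 - r)⁻¹ := by
  calc ∑ a ∈ S, r ^ g a = ∑ d ∈ S.image g, r ^ d :=
        (Finset.sum_image (fun x hx y hy h => hg hx hy h)).symm
    _ ≤ ∑' d : ℕ, r ^ d :=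
        Summable.sum_le_tsum _ (fun i _ => pow_nonneg hr0 i) (summable_geometric_of_lt_one hr0 hr1)
    _ = (1 - r)⁻¹ := tsum_geometric_of_lt_one hr0 hr1

lemma geo_sum_shift {r : ℝ} (hr0 : 0 ≤ r) (hr1 : r < 1) (S : Finset ℕ) (g : ℕ → ℕ) (q : ℕ)
    (hg : Set.InjOn g S) (hq : ∀ a ∈ S, q ≤ g a) :
    ∑ a ∈ S, r ^ g a ≤ r ^ q * (1 - r)⁻¹ := by
  have h1 : ∀ a ∈ S, r ^ g a = r ^ q * r ^ (g a - q) := fun a ha => by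
    rw [← pow_add]; congr 1; have := hq a ha; omega
  rw [Finset.sum_congr rfl h1, ← Finset.mul_sum]
  refine mul_le_mul_of_nonneg_left (geo_sum hr0 hr1 S _ ?_) (pow_nonneg hr0 q)
  intro x hx y hy hxy
  have hxy' : g x - q = g y - q := hxy
  exact hg hx hy (by have := hq x hx; have := hq y hy; omega)

lemma geo_dist {r : ℝ} (hr0 : 0 ≤ r) (hr1 : r < 1) (S : Finset ℕ) (a : ℕ) :
    ∑ b ∈ S, r ^ Nat.dist a b ≤ 2 * (1 - r)⁻¹ := by
  rw [← Finset.sum_filter_add_sum_filter_not S (fun b => b ≤ a)]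
  have e1 : ∑ b ∈ S.filter (fun b => b ≤ a), r ^ Nat.dist a b
      = ∑ b ∈ S.filter (fun b => b ≤ a), r ^ (a - b) := by
    refine Finset.sum_congr rfl fun b hb => ?_
    rw [Nat.dist_eq_sub_of_le_right (Finset.mem_filter.1 hb).2]
  have e2 : ∑ b ∈ S.filter (fun b => ¬ b ≤ a), r ^ Nat.dist a b
      = ∑ b ∈ S.filter (fun b => ¬ b ≤ a), r ^ (b - a) := by
    refine Finset.sum_congr rfl fun b hb => ?_
    rw [Nat.dist_eq_sub_of_le (le_of_lt (lt_of_not_ge (Finset.mem_filter.1 hb).2))]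
  rw [e1, e2]
  have b1 : ∑ b ∈ S.filter (fun b => b ≤ a), r ^ (a - b) ≤ (1 - r)⁻¹ := by
    refine geo_sum hr0 hr1 _ _ ?_
    intro x hx y hy h
    have hx' := (Finset.mem_filter.1 hx).2
    have hy' := (Finset.mem_filter.1 hy).2
    have h' : a - x = a - y := h
    omega
  have b2 : ∑ b ∈ S.filter (fun b => ¬ b ≤ a), r ^ (b - a) ≤ (1 - r)⁻¹ := by
    refine geo_sum hr0 hr1 _ _ ?_
    intro x hx y hy h
    have hx' := (Finset.mem_filter.1 hx).2
    have hy' := (Finset.mem_filter.1 hy).2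
    have h' : x - a = y - a := h
    omega
  linarith

set_option maxHeartbeats 1000000

/-- Bernstein block method, step 3: the sum of the variances of the
blocks `ξ_j` is asymptotically equal to the total variance `σ_n²`. -/
theorem statement17
    (μ : Measure Seq2) (hμ : IsBernoulli2 μ)
    (X : ℕ → Seq2 → ℝ) (hmeas : ∀ j, Measurable (X j))
    (M : ℝ) (hM : 0 < M) (hbd : ∀ j : ℕ, 1 ≤ j → ∀ ω, |X j ω| ≤ M)
    (hmean : ∀ j : ℕ, 1 ≤ j → (∫ ω, X j ω ∂μ) = 0)
    (C₀ : ℝ) (hC₀ : 0 < C₀) (r₀ : ℝ) (hr₀ : r₀ ∈ Set.Ioo (0 : ℝ) 1)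
    (hcov : ∀ i j : ℕ, 1 ≤ i → i ≤ j →
      |∫ ω, X i ω * X j ω ∂μ| ≤ C₀ * r₀ ^ (j - i))
    (σm : ℝ) (hσm : 0 < σm)
    (hvar : ∀ᶠ n : ℕ in atTop, σm ^ 2 * n ≤ ∫ ω, (Sn X n ω) ^ 2 ∂μ)
    (τ : ℝ) (hτ : τ ∈ Set.Ioo (0 : ℝ) 1) :
    Tendsto
      (fun n : ℕ =>
        (∑ j ∈ Finset.range (blockK τ n), ∫ ω, (xiBlock X τ n j ω) ^ 2 ∂μ) /
          ∫ ω, (Sn X n ω) ^ 2 ∂μ)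
      atTop (𝓝 1) := by
  classical
  obtain ⟨hprob, -⟩ := hμ
  haveI := hprob
  obtain ⟨hr0, hr1⟩ := hr₀
  obtain ⟨hτ0, hτ1⟩ := hτ
  have h1r : 0 < 1 - r₀ := by linarith
  set C₁ : ℝ := 2 * C₀ * (1 - r₀)⁻¹ with hC₁def
  have hC₁pos : 0 < C₁ := by positivity
  -- integrability of products
  have hint : ∀ a b : ℕ, 1 ≤ a → 1 ≤ b → Integrable (fun ω => X a ω * X b ω) μ := by
    intro a b ha hb
    refine Integrable.mono' (integrable_const (M * M))
      ((hmeas a).mul (hmeas b)).aestronglyMeasurable ?_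
    filter_upwards with ω
    rw [Real.norm_eq_abs, abs_mul]
    exact mul_le_mul (hbd a ha ω) (hbd b hb ω) (abs_nonneg _) hM.le
  -- covariance bound in dist form
  have hcov' : ∀ a b : ℕ, 1 ≤ a → 1 ≤ b →
      |∫ ω, X a ω * X b ω ∂μ| ≤ C₀ * r₀ ^ Nat.dist a b := by
    intro a b ha hb
    rcases le_total a b with h | h
    · rw [Nat.dist_eq_sub_of_le h]; exact hcov a b ha h
    · rw [Nat.dist_eq_sub_of_le_right h]
      have : (∫ ω, X a ω * X b ω ∂μ) = ∫ ω, X b ω * X a ω ∂μ := by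
        simp_rw [mul_comm]
      rw [this]; exact hcov b a hb h
  -- expansion of integral of product of sums
  have hexp : ∀ (f g : ℕ → Seq2 → ℝ) (s t : Finset ℕ),
      (∀ i ∈ s, ∀ j ∈ t, Integrable (fun ω => f i ω * g j ω) μ) →
      ∫ ω, (∑ i ∈ s, f i ω) * (∑ j ∈ t, g j ω) ∂μ
        = ∑ i ∈ s, ∑ j ∈ t, ∫ ω, f i ω * g j ω ∂μ := by
    intro f g s t hintfg
    have e : (fun ω => (∑ i ∈ s, f i ω) * (∑ j ∈ t, g j ω))
        = fun ω => ∑ i ∈ s, ∑ j ∈ t, f i ω * g j ω := by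
      funext ω; rw [Finset.sum_mul_sum]
    rw [e, integral_finset_sum]
    · exact Finset.sum_congr rfl fun i hi => integral_finset_sum _ (fun j hj => hintfg i hi j hj)
    · exact fun i hi => integrable_finset_sum _ (fun j hj => hintfg i hi j hj)
  -- master covariance bound: sum over A times sum over B, bounded by C₁ * card A
  have hL : ∀ (A B : Finset ℕ), (∀ a ∈ A, 1 ≤ a) → (∀ b ∈ B, 1 ≤ b) →
      |∫ ω, (∑ a ∈ A, X a ω) * (∑ b ∈ B, X b ω) ∂μ| ≤ C₁ * A.card := by
    intro A B hA hB
    rw [hexp X X A B (fun a ha b hb => hint a b (hA a ha) (hB b hb))]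
    calc |∑ a ∈ A, ∑ b ∈ B, ∫ ω, X a ω * X b ω ∂μ|
        ≤ ∑ a ∈ A, |∑ b ∈ B, ∫ ω, X a ω * X b ω ∂μ| := Finset.abs_sum_le_sum_abs _ _
      _ ≤ ∑ a ∈ A, (C₀ * (2 * (1 - r₀)⁻¹)) := by
          refine Finset.sum_le_sum fun a ha => ?_
          calc |∑ b ∈ B, ∫ ω, X a ω * X b ω ∂μ|
              ≤ ∑ b ∈ B, |∫ ω, X a ω * X b ω ∂μ| := Finset.abs_sum_le_sum_abs _ _
            _ ≤ ∑ b ∈ B, C₀ * r₀ ^ Nat.dist a b :=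
                Finset.sum_le_sum fun b hb => hcov' a b (hA a ha) (hB b hb)
            _ = C₀ * ∑ b ∈ B, r₀ ^ Nat.dist a b := by rw [Finset.mul_sum]
            _ ≤ C₀ * (2 * (1 - r₀)⁻¹) :=
                mul_le_mul_of_nonneg_left (geo_dist hr0.le hr1 B a) hC₀.le
      _ = C₁ * A.card := by rw [Finset.sum_const, nsmul_eq_mul, hC₁def]; ring
  -- gap bound
  have hgapL : ∀ (A B : Finset ℕ) (G : ℕ), (∀ a ∈ A, 1 ≤ a) → (∀ b ∈ B, 1 ≤ b) →
      (∀ a ∈ A, ∀ b ∈ B, a + G ≤ b) →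
      |∫ ω, (∑ a ∈ A, X a ω) * (∑ b ∈ B, X b ω) ∂μ|
        ≤ A.card * (C₀ * (r₀ ^ G * (1 - r₀)⁻¹)) := by
    intro A B G hA hB hgap
    rw [hexp X X A B (fun a ha b hb => hint a b (hA a ha) (hB b hb))]
    calc |∑ a ∈ A, ∑ b ∈ B, ∫ ω, X a ω * X b ω ∂μ|
        ≤ ∑ a ∈ A, |∑ b ∈ B, ∫ ω, X a ω * X b ω ∂μ| := Finset.abs_sum_le_sum_abs _ _
      _ ≤ ∑ a ∈ A, (C₀ * (r₀ ^ G * (1 - r₀)⁻¹)) := by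
          refine Finset.sum_le_sum fun a ha => ?_
          calc |∑ b ∈ B, ∫ ω, X a ω * X b ω ∂μ|
              ≤ ∑ b ∈ B, |∫ ω, X a ω * X b ω ∂μ| := Finset.abs_sum_le_sum_abs _ _
            _ ≤ ∑ b ∈ B, C₀ * r₀ ^ Nat.dist a b :=
                Finset.sum_le_sum fun b hb => hcov' a b (hA a ha) (hB b hb)
            _ = C₀ * ∑ b ∈ B, r₀ ^ Nat.dist a b := by rw [Finset.mul_sum]
            _ = C₀ * ∑ b ∈ B, r₀ ^ (b - a) := by
                congr 1
                refine Finset.sum_congr rfl fun b hb => ?_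
                have := hgap a ha b hb
                rw [Nat.dist_eq_sub_of_le (by omega)]
            _ ≤ C₀ * (r₀ ^ G * (1 - r₀)⁻¹) := by
                refine mul_le_mul_of_nonneg_left ?_ hC₀.le
                refine geo_sum_shift hr0.le hr1 B (fun b => b - a) G ?_ ?_
                · intro x hx y hy hxy
                  have hx' := hgap a ha x hx
                  have hy' := hgap a ha y hy
                  have hxy' : x - a = y - a := hxy
                  omega
                · intro b hb
                  have := hgap a ha b hb
                  show G ≤ b - a
                  omega
      _ = A.card * (C₀ * (r₀ ^ G * (1 - r₀)⁻¹)) := by rw [Finset.sum_const, nsmul_eq_mul]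
  -- main eventual bound
  have main : ∀ᶠ n : ℕ in atTop,
      |(∑ j ∈ Finset.range (blockK τ n), ∫ ω, (xiBlock X τ n j ω) ^ 2 ∂μ) /
          (∫ ω, (Sn X n ω) ^ 2 ∂μ) - 1| ≤
        (2 * C₁ / σm ^ 2) * (((n - blockK τ n * blockP τ n : ℕ) : ℝ) / n)
          + (C₀ * (1 - r₀)⁻¹ / σm ^ 2) * (n * r₀ ^ blockQ n) := by
    filter_upwards [hvar, eventually_ge_atTop 1,
      ((tendsto_rpow_atTop hτ0).comp tendsto_natCast_atTop_atTop).eventually_ge_atTop 2]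
      with n hvarn hn1 hnτ2
    simp only [Function.comp] at hnτ2
    have hn0 : (0 : ℝ) < n := by exact_mod_cast hn1
    set P := blockP τ n with hPdef
    set Q := blockQ n with hQdef
    set K := blockK τ n with hKdef
    have hP1 : 1 ≤ P := by
      rw [hPdef, blockP]
      exact Nat.le_floor (by push_cast; linarith)
    have hPQpos : 0 < P + Q := by omega
    have hKPQ : K * (P + Q) ≤ n := Nat.div_mul_le_self n (P + Q)
    have hKP : K * P ≤ n := le_trans (Nat.mul_le_mul_left K (Nat.le_add_right P Q)) hKPQ
    have hKn : K ≤ n := by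
      calc K ≤ K * (P + Q) := Nat.le_mul_of_pos_right K hPQpos
        _ ≤ n := hKPQ
    -- blocks
    set BB : ℕ → Finset ℕ := fun j => Finset.Icc (j * P + j * Q + 1) ((j + 1) * P + j * Q)
      with hBB
    have hBmem : ∀ j, j < K → ∀ m ∈ BB j, 1 ≤ m ∧ m ≤ n := by
      intro j hj m hm
      rw [hBB] at hm
      rw [Finset.mem_Icc] at hm
      have h1 : (j + 1) * P ≤ K * P := Nat.mul_le_mul_right P hj
      have h2 : j * Q ≤ K * Q := Nat.mul_le_mul_right Q (le_of_lt hj)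
      have e : K * (P + Q) = K * P + K * Q := Nat.mul_add K P Q
      omega
    have hB1 : ∀ j, j < K → ∀ m ∈ BB j, 1 ≤ m := fun j hj m hm => (hBmem j hj m hm).1
    have hord : ∀ i j : ℕ, i < j → ∀ m ∈ BB i, ∀ m' ∈ BB j, m + Q < m' := by
      intro i j hij m hm m' hm'
      rw [hBB, Finset.mem_Icc] at hm hm'
      have h1 : (i + 1) * P ≤ j * P := Nat.mul_le_mul_right P hij
      have h2 : (i + 1) * Q ≤ j * Q := Nat.mul_le_mul_right Q hij
      have e : (i + 1) * Q = i * Q + Q := by ring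
      omega
    have hBdisj : (Finset.range K : Set ℕ).PairwiseDisjoint BB := by
      intro i hi j hj hij
      rcases lt_or_gt_of_ne hij with h | h
      · refine Finset.disjoint_left.2 fun m hm hm' => ?_
        have := hord i j h m hm m hm'
        omega
      · refine Finset.disjoint_left.2 fun m hm hm' => ?_
        have := hord j i h m hm' m hm
        omega
    have hBcard : ∀ j, (BB j).card = P := by
      intro j
      rw [hBB]
      simp only [Nat.card_Icc]
      have e : (j + 1) * P = j * P + P := by ring
      omega
    set U : Finset ℕ := (Finset.range K).biUnion BB with hU
    have hUsub : U ⊆ Finset.Icc 1 n := by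
      intro m hm
      rw [hU, Finset.mem_biUnion] at hm
      obtain ⟨j, hj, hmj⟩ := hm
      rw [Finset.mem_range] at hj
      have := hBmem j hj m hmj
      rw [Finset.mem_Icc]; omega
    have hUcard : U.card = K * P := by
      rw [hU, Finset.card_biUnion (fun i hi j hj hij => hBdisj hi hj hij)]
      rw [Finset.sum_congr rfl (fun j _ => hBcard j), Finset.sum_const, Finset.card_range,
        smul_eq_mul]
    set D : Finset ℕ := Finset.Icc 1 n \ U with hD
    have hDsub : D ⊆ Finset.Icc 1 n := Finset.sdiff_subset
    have hD1 : ∀ m ∈ D, 1 ≤ m := fun m hm => (Finset.mem_Icc.1 (hDsub hm)).1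
    have hU1 : ∀ m ∈ U, 1 ≤ m := fun m hm => (Finset.mem_Icc.1 (hUsub hm)).1
    have hIcc1 : ∀ m ∈ Finset.Icc 1 n, 1 ≤ m := fun m hm => (Finset.mem_Icc.1 hm).1
    have hDcard : D.card = n - K * P := by
      rw [hD, Finset.card_sdiff_of_subset hUsub, hUcard, Nat.card_Icc]
      omega
    -- pointwise identities
    have hxiY : ∀ j ω, xiBlock X τ n j ω = ∑ m ∈ BB j, X m ω := fun j ω => rfl
    have hUD : ∀ ω, (∑ m ∈ Finset.Icc 1 n, X m ω)
        = (∑ m ∈ U, X m ω) + ∑ m ∈ D, X m ω := by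
      intro ω
      rw [← Finset.sum_union Finset.disjoint_sdiff, Finset.union_sdiff_of_subset hUsub]
    have hSnY : ∀ ω, Sn X n ω = (∑ m ∈ U, X m ω) + ∑ m ∈ D, X m ω := fun ω => hUD ω
    have hStilU : ∀ ω, Stil X τ n ω = ∑ m ∈ U, X m ω := by
      intro ω
      rw [Stil, hU, Finset.sum_biUnion (fun i hi j hj hij => hBdisj hi hj hij)]
      exact Finset.sum_congr rfl fun j _ => hxiY j ω
    -- integrability of products of sums
    have hintB : ∀ (s t : Finset ℕ), (∀ a ∈ s, 1 ≤ a) → (∀ b ∈ t, 1 ≤ b) →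
        Integrable (fun ω => (∑ a ∈ s, X a ω) * (∑ b ∈ t, X b ω)) μ := by
      intro s t hs ht
      have e : (fun ω => (∑ a ∈ s, X a ω) * (∑ b ∈ t, X b ω))
          = fun ω => ∑ a ∈ s, ∑ b ∈ t, X a ω * X b ω := by
        funext ω; rw [Finset.sum_mul_sum]
      rw [e]
      exact integrable_finset_sum _ fun a ha =>
        integrable_finset_sum _ fun b hb => hint a b (hs a ha) (ht b hb)
    -- T1 : sum of block variances
    have hT1 : (∑ j ∈ Finset.range K, ∫ ω, (xiBlock X τ n j ω) ^ 2 ∂μ)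
        = ∑ j ∈ Finset.range K,
            ∫ ω, (∑ a ∈ BB j, X a ω) * (∑ b ∈ BB j, X b ω) ∂μ := by
      refine Finset.sum_congr rfl fun j _ => ?_
      refine integral_congr_ae (Filter.Eventually.of_forall fun ω => ?_)
      simp only [pow_two, hxiY]
    -- T2 : integral of Stil squared
    have hT2 : ∫ ω, (Stil X τ n ω) ^ 2 ∂μ
        = ∑ i ∈ Finset.range K, ∑ j ∈ Finset.range K,
            ∫ ω, (∑ a ∈ BB i, X a ω) * (∑ b ∈ BB j, X b ω) ∂μ := by
      have e : (fun ω => (Stil X τ n ω) ^ 2)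
          = fun ω => (∑ i ∈ Finset.range K, ∑ a ∈ BB i, X a ω)
              * (∑ j ∈ Finset.range K, ∑ b ∈ BB j, X b ω) := by
        funext ω
        rw [sq]
        have : Stil X τ n ω = ∑ i ∈ Finset.range K, ∑ a ∈ BB i, X a ω := by
          rw [Stil]; exact Finset.sum_congr rfl fun j _ => hxiY j ω
        rw [this]
      rw [e]
      exact hexp (fun i ω => ∑ a ∈ BB i, X a ω) (fun j ω => ∑ b ∈ BB j, X b ω) _ _
        (fun i hi j hj => hintB (BB i) (BB j) (hB1 i (Finset.mem_range.1 hi))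
          (hB1 j (Finset.mem_range.1 hj)))
    -- cross-block bound
    have hcross : ∀ i j : ℕ, i < K → j < K → i ≠ j →
        |∫ ω, (∑ a ∈ BB i, X a ω) * (∑ b ∈ BB j, X b ω) ∂μ|
          ≤ P * (C₀ * (r₀ ^ Q * (1 - r₀)⁻¹)) := by
      have key : ∀ i j : ℕ, i < K → j < K → i < j →
          |∫ ω, (∑ a ∈ BB i, X a ω) * (∑ b ∈ BB j, X b ω) ∂μ|
            ≤ P * (C₀ * (r₀ ^ Q * (1 - r₀)⁻¹)) := by
        intro i j hi hj hij
        have h := hgapL (BB i) (BB j) Q (hB1 i hi) (hB1 j hj)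
          (fun a ha b hb => le_of_lt (hord i j hij a ha b hb))
        rw [hBcard i] at h
        calc |∫ ω, (∑ a ∈ BB i, X a ω) * (∑ b ∈ BB j, X b ω) ∂μ|
            ≤ (P : ℝ) * (C₀ * (r₀ ^ Q * (1 - r₀)⁻¹)) := h
          _ = P * (C₀ * (r₀ ^ Q * (1 - r₀)⁻¹)) := rfl
      intro i j hi hj hij
      rcases lt_or_gt_of_ne hij with h | h
      · exact key i j hi hj h
      · have e : ∫ ω, (∑ a ∈ BB i, X a ω) * (∑ b ∈ BB j, X b ω) ∂μ
            = ∫ ω, (∑ a ∈ BB j, X a ω) * (∑ b ∈ BB i, X b ω) ∂μ := by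
          refine integral_congr_ae (Filter.Eventually.of_forall fun ω => ?_)
          exact mul_comm _ _
        rw [e]
        exact key j i hj hi h
    -- |T1 - T2|
    have hT12 : |(∑ j ∈ Finset.range K, ∫ ω, (xiBlock X τ n j ω) ^ 2 ∂μ)
          - ∫ ω, (Stil X τ n ω) ^ 2 ∂μ|
        ≤ (K : ℝ) * K * (P * (C₀ * (r₀ ^ Q * (1 - r₀)⁻¹))) := by
      rw [hT1, hT2]
      have split : ∀ i ∈ Finset.range K,
          ∑ j ∈ Finset.range K, ∫ ω, (∑ a ∈ BB i, X a ω) * (∑ b ∈ BB j, X b ω) ∂μ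
            = (∫ ω, (∑ a ∈ BB i, X a ω) * (∑ b ∈ BB i, X b ω) ∂μ)
              + ∑ j ∈ (Finset.range K).erase i,
                  ∫ ω, (∑ a ∈ BB i, X a ω) * (∑ b ∈ BB j, X b ω) ∂μ :=
        fun i hi => (Finset.add_sum_erase _ _ hi).symm
      rw [Finset.sum_congr rfl split, Finset.sum_add_distrib]
      rw [abs_sub_comm, add_comm, add_sub_assoc, sub_self, add_zero]
      calc |∑ i ∈ Finset.range K, ∑ j ∈ (Finset.range K).erase i,
              ∫ ω, (∑ a ∈ BB i, X a ω) * (∑ b ∈ BB j, X b ω) ∂μ|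
          ≤ ∑ i ∈ Finset.range K, |∑ j ∈ (Finset.range K).erase i,
              ∫ ω, (∑ a ∈ BB i, X a ω) * (∑ b ∈ BB j, X b ω) ∂μ| :=
            Finset.abs_sum_le_sum_abs _ _
        _ ≤ ∑ i ∈ Finset.range K, (K : ℝ) * (P * (C₀ * (r₀ ^ Q * (1 - r₀)⁻¹))) := by
            refine Finset.sum_le_sum fun i hi => ?_
            calc |∑ j ∈ (Finset.range K).erase i,
                    ∫ ω, (∑ a ∈ BB i, X a ω) * (∑ b ∈ BB j, X b ω) ∂μ|
                ≤ ∑ j ∈ (Finset.range K).erase i,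
                    |∫ ω, (∑ a ∈ BB i, X a ω) * (∑ b ∈ BB j, X b ω) ∂μ| :=
                  Finset.abs_sum_le_sum_abs _ _
              _ ≤ ∑ j ∈ (Finset.range K).erase i, (P * (C₀ * (r₀ ^ Q * (1 - r₀)⁻¹))) := by
                  refine Finset.sum_le_sum fun j hj => ?_
                  have hj' := Finset.mem_of_mem_erase hj
                  exact hcross i j (Finset.mem_range.1 hi) (Finset.mem_range.1 hj')
                    (Ne.symm (Finset.ne_of_mem_erase hj))
              _ ≤ (K : ℝ) * (P * (C₀ * (r₀ ^ Q * (1 - r₀)⁻¹))) := by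
                  rw [Finset.sum_const, nsmul_eq_mul]
                  have hcard : ((Finset.range K).erase i).card ≤ K := by
                    calc ((Finset.range K).erase i).card ≤ (Finset.range K).card :=
                          Finset.card_le_card (Finset.erase_subset _ _)
                      _ = K := Finset.card_range K
                  have hnn : (0:ℝ) ≤ P * (C₀ * (r₀ ^ Q * (1 - r₀)⁻¹)) := by positivity
                  exact mul_le_mul_of_nonneg_right (by exact_mod_cast hcard) hnn
        _ = (K : ℝ) * K * (P * (C₀ * (r₀ ^ Q * (1 - r₀)⁻¹))) := by
            rw [Finset.sum_const, Finset.card_range, nsmul_eq_mul]; ring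
    -- |T3 - T2|
    have hT32 : |(∫ ω, (Sn X n ω) ^ 2 ∂μ) - ∫ ω, (Stil X τ n ω) ^ 2 ∂μ|
        ≤ 2 * C₁ * D.card := by
      have hpt : (fun ω => (Sn X n ω) ^ 2)
          = fun ω => (Stil X τ n ω) ^ 2
              + ((∑ m ∈ D, X m ω) * (∑ m ∈ Finset.Icc 1 n, X m ω)
                + (∑ m ∈ D, X m ω) * (∑ m ∈ U, X m ω)) := by
        funext ω
        have h1 := hSnY ω
        have h2 := hStilU ω
        have h3 := hUD ω
        rw [Sn] at h1 ⊢
        rw [h1, h2]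
        ring
      have hintStil : Integrable (fun ω => (Stil X τ n ω) ^ 2) μ := by
        have e : (fun ω => (Stil X τ n ω) ^ 2)
            = fun ω => (∑ m ∈ U, X m ω) * (∑ m ∈ U, X m ω) := by
          funext ω; rw [sq, hStilU]
        rw [e]; exact hintB U U hU1 hU1
      have hi1 := hintB D (Finset.Icc 1 n) hD1 hIcc1
      have hi2 := hintB D U hD1 hU1
      have hsplit : ∫ ω, (Sn X n ω) ^ 2 ∂μ
          = (∫ ω, (Stil X τ n ω) ^ 2 ∂μ)
            + ((∫ ω, (∑ m ∈ D, X m ω) * (∑ m ∈ Finset.Icc 1 n, X m ω) ∂μ)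
              + ∫ ω, (∑ m ∈ D, X m ω) * (∑ m ∈ U, X m ω) ∂μ) := by
        have hi12 : Integrable (fun ω => (∑ m ∈ D, X m ω) * (∑ m ∈ Finset.Icc 1 n, X m ω)
            + (∑ m ∈ D, X m ω) * (∑ m ∈ U, X m ω)) μ := hi1.add hi2
        rw [hpt, integral_add hintStil hi12, integral_add hi1 hi2]
      rw [hsplit]
      rw [add_sub_cancel_left]
      have b1 := hL D (Finset.Icc 1 n) hD1 hIcc1
      have b2 := hL D U hD1 hU1
      calc |(∫ ω, (∑ m ∈ D, X m ω) * (∑ m ∈ Finset.Icc 1 n, X m ω) ∂μ)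
            + ∫ ω, (∑ m ∈ D, X m ω) * (∑ m ∈ U, X m ω) ∂μ|
          ≤ |∫ ω, (∑ m ∈ D, X m ω) * (∑ m ∈ Finset.Icc 1 n, X m ω) ∂μ|
            + |∫ ω, (∑ m ∈ D, X m ω) * (∑ m ∈ U, X m ω) ∂μ| := abs_add_le _ _
        _ ≤ C₁ * D.card + C₁ * D.card := add_le_add b1 b2
        _ = 2 * C₁ * D.card := by ring
    -- final numeric assembly
    set T1 := ∑ j ∈ Finset.range K, ∫ ω, (xiBlock X τ n j ω) ^ 2 ∂μ with hT1d
    set T3 := ∫ ω, (Sn X n ω) ^ 2 ∂μ with hT3d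
    have hT3pos : 0 < T3 := by
      have : (0:ℝ) < σm ^ 2 * n := by positivity
      linarith [hvarn]
    have hdiff : |T1 - T3| ≤ 2 * C₁ * ((n - K * P : ℕ) : ℝ)
        + (n : ℝ) * n * (C₀ * (r₀ ^ Q * (1 - r₀)⁻¹)) := by
      have tri : |T1 - T3| ≤ |T1 - ∫ ω, (Stil X τ n ω) ^ 2 ∂μ|
          + |(∫ ω, (Sn X n ω) ^ 2 ∂μ) - ∫ ω, (Stil X τ n ω) ^ 2 ∂μ| := by
        rw [hT3d]
        calc |T1 - ∫ ω, (Sn X n ω) ^ 2 ∂μ|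
            = |(T1 - ∫ ω, (Stil X τ n ω) ^ 2 ∂μ)
              - ((∫ ω, (Sn X n ω) ^ 2 ∂μ) - ∫ ω, (Stil X τ n ω) ^ 2 ∂μ)| := by ring_nf
          _ ≤ _ := abs_sub _ _
      have hKKP : (K : ℝ) * K * P ≤ (n : ℝ) * n := by
        have c1 : (K : ℝ) * P ≤ n := by exact_mod_cast hKP
        have c2 : (K : ℝ) ≤ n := by exact_mod_cast hKn
        have : (K : ℝ) * K * P = K * (K * P) := by ring
        rw [this]
        exact mul_le_mul c2 c1 (by positivity) hn0.le
      have hcast : (D.card : ℝ) = ((n - K * P : ℕ) : ℝ) := by rw [hDcard]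
      have h2 : |(∫ ω, (Sn X n ω) ^ 2 ∂μ) - ∫ ω, (Stil X τ n ω) ^ 2 ∂μ|
          ≤ 2 * C₁ * ((n - K * P : ℕ) : ℝ) := by
        rw [← hcast]; exact hT32
      have h1 : |T1 - ∫ ω, (Stil X τ n ω) ^ 2 ∂μ|
          ≤ (n : ℝ) * n * (C₀ * (r₀ ^ Q * (1 - r₀)⁻¹)) := by
        refine le_trans hT12 ?_
        have hX : (0:ℝ) ≤ C₀ * (r₀ ^ Q * (1 - r₀)⁻¹) := by positivity
        calc (K : ℝ) * K * (P * (C₀ * (r₀ ^ Q * (1 - r₀)⁻¹)))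
            = ((K : ℝ) * K * P) * (C₀ * (r₀ ^ Q * (1 - r₀)⁻¹)) := by ring
          _ ≤ ((n : ℝ) * n) * (C₀ * (r₀ ^ Q * (1 - r₀)⁻¹)) :=
              mul_le_mul_of_nonneg_right hKKP hX
          _ = (n : ℝ) * n * (C₀ * (r₀ ^ Q * (1 - r₀)⁻¹)) := by ring
      linarith
    have hratio : |T1 / T3 - 1| = |T1 - T3| / T3 := by
      rw [div_sub_one hT3pos.ne', abs_div, abs_of_pos hT3pos]
    rw [hratio]
    calc |T1 - T3| / T3
        ≤ (2 * C₁ * ((n - K * P : ℕ) : ℝ)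
            + (n : ℝ) * n * (C₀ * (r₀ ^ Q * (1 - r₀)⁻¹))) / (σm ^ 2 * n) := by
          apply div_le_div₀ (by positivity) hdiff (by positivity) hvarn
      _ = (2 * C₁ / σm ^ 2) * (((n - K * P : ℕ) : ℝ) / n)
            + (C₀ * (1 - r₀)⁻¹ / σm ^ 2) * (n * r₀ ^ Q) := by
          field_simp
  have heps : Tendsto (fun n : ℕ =>
      (2 * C₁ / σm ^ 2) * (((n - blockK τ n * blockP τ n : ℕ) : ℝ) / n)
        + (C₀ * (1 - r₀)⁻¹ / σm ^ 2) * (n * r₀ ^ blockQ n)) atTop (𝓝 0) := by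
    have hb : Tendsto (fun n : ℕ => (n : ℝ) * r₀ ^ blockQ n) atTop (𝓝 0) := by
      have hlogr : Real.log r₀ < 0 := Real.log_neg hr0 hr1
      refine squeeze_zero' (Filter.Eventually.of_forall fun n => by positivity) ?_
        tendsto_one_div_atTop_nhds_zero_nat
      filter_upwards [eventually_ge_atTop 1,
        (Real.tendsto_log_atTop.comp tendsto_natCast_atTop_atTop).eventually_ge_atTop
          (2 / (-Real.log r₀))] with n hn1 hlogn
      have hn0 : (0 : ℝ) < n := by exact_mod_cast hn1
      set L := Real.log n with hLdef
      have hlogrpos : (0:ℝ) < -Real.log r₀ := by linarith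
      have hL0 : 0 < L := lt_of_lt_of_le (div_pos two_pos hlogrpos) hlogn
      have hL2 : 2 ≤ L * (-Real.log r₀) := (div_le_iff₀ hlogrpos).1 hlogn
      have hQ : L ^ 2 ≤ (blockQ n : ℝ) := Nat.le_ceil _
      have hrQ : r₀ ^ blockQ n ≤ Real.exp (-(2 * L)) := by
        have e1 : r₀ ^ blockQ n = Real.exp ((blockQ n : ℝ) * Real.log r₀) := by
          rw [Real.exp_nat_mul, Real.exp_log hr0]
        rw [e1]
        apply Real.exp_le_exp.2
        have h1 : (blockQ n : ℝ) * Real.log r₀ ≤ L ^ 2 * Real.log r₀ :=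
          mul_le_mul_of_nonpos_right hQ hlogr.le
        nlinarith
      have hexpL : Real.exp (-(2 * L)) = ((n : ℝ) ^ 2)⁻¹ := by
        rw [Real.exp_neg]
        congr 1
        rw [two_mul, Real.exp_add, hLdef, Real.exp_log hn0]
        ring
      calc (n : ℝ) * r₀ ^ blockQ n ≤ n * ((n : ℝ) ^ 2)⁻¹ := by
            rw [← hexpL]; exact mul_le_mul_of_nonneg_left hrQ hn0.le
        _ = 1 / n := by field_simp
    have hlog2 : ∀ s : ℝ, 0 < s →
        Tendsto (fun x : ℝ => Real.log x ^ 2 / x ^ s) atTop (𝓝 0) := by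
      intro s hs
      have h := (isLittleO_log_rpow_rpow_atTop (2 : ℝ) hs).tendsto_div_nhds_zero
      refine h.congr fun x => ?_
      rw [show (2:ℝ) = ((2:ℕ):ℝ) by norm_num, Real.rpow_natCast]
    have hG : Tendsto (fun x : ℝ => x ^ (τ - 1) + (Real.log x ^ 2 / x + x⁻¹)
        + 2 * (Real.log x ^ 2 / x ^ τ + ((x : ℝ) ^ τ)⁻¹)) atTop (𝓝 0) := by
      have t1 : Tendsto (fun x : ℝ => x ^ (τ - 1)) atTop (𝓝 0) := by
        have := tendsto_rpow_neg_atTop (by linarith : (0:ℝ) < 1 - τ)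
        refine this.congr fun x => by norm_num
      have t2 : Tendsto (fun x : ℝ => Real.log x ^ 2 / x) atTop (𝓝 0) := by
        have := hlog2 1 one_pos
        refine this.congr fun x => by rw [Real.rpow_one]
      have t3 : Tendsto (fun x : ℝ => x⁻¹) atTop (𝓝 (0:ℝ)) := tendsto_inv_atTop_zero
      have t4 := hlog2 τ hτ0
      have t5 : Tendsto (fun x : ℝ => ((x : ℝ) ^ τ)⁻¹) atTop (𝓝 0) :=
        (tendsto_rpow_atTop hτ0).inv_tendsto_atTop
      have := (t1.add (t2.add t3)).add (((t4.add t5)).const_mul 2)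
      simpa using this
    have ha : Tendsto (fun n : ℕ => ((n - blockK τ n * blockP τ n : ℕ) : ℝ) / n)
        atTop (𝓝 0) := by
      refine squeeze_zero' (Filter.Eventually.of_forall fun n => by positivity) ?_
        (hG.comp tendsto_natCast_atTop_atTop)
      filter_upwards [eventually_ge_atTop 1,
        ((tendsto_rpow_atTop hτ0).comp tendsto_natCast_atTop_atTop).eventually_ge_atTop 2]
        with n hn1 hnτ2
      simp only [Function.comp] at hnτ2 ⊢
      have hn0 : (0 : ℝ) < n := by exact_mod_cast hn1
      set P := blockP τ n with hPdef
      set Q := blockQ n with hQdef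
      set K := blockK τ n with hKdef
      have hP1 : 1 ≤ P := by
        rw [hPdef, blockP]
        exact Nat.le_floor (by push_cast; linarith)
      have hPQpos : 0 < P + Q := by omega
      have hKPQ : K * (P + Q) ≤ n := Nat.div_mul_le_self n (P + Q)
      have hKP : K * P ≤ n := le_trans (Nat.mul_le_mul_left K (Nat.le_add_right P Q)) hKPQ
      have hsub : n - K * P ≤ K * Q + P + Q := by
        have hdm : n < n / (P + Q) * (P + Q) + (P + Q) := Nat.lt_div_mul_add hPQpos
        have hK : K = n / (P + Q) := rfl
        rw [← hK] at hdm
        have e : K * (P + Q) = K * P + K * Q := Nat.mul_add K P Q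
        calc n - K * P ≤ K * Q + (P + Q) := by omega
          _ = K * Q + P + Q := by omega
      -- real bounds
      have hPreal : ((n : ℝ) ^ τ) / 2 ≤ (P : ℝ) := by
        have h1 : (n : ℝ) ^ τ - 1 < (P : ℝ) := by
          rw [hPdef, blockP]; exact Nat.sub_one_lt_floor _
        linarith
      have hPuse : (P : ℝ) ≤ (n : ℝ) ^ τ := by
        rw [hPdef, blockP]; exact Nat.floor_le (by positivity)
      have hQreal : (Q : ℝ) ≤ Real.log n ^ 2 + 1 := by
        rw [hQdef, blockQ]
        exact le_of_lt (Nat.ceil_lt_add_one (by positivity))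
      have hPpos : (0 : ℝ) < P := by exact_mod_cast hP1
      have hnτpos : (0 : ℝ) < (n : ℝ) ^ τ := by positivity
      -- the three pieces
      have p1 : (P : ℝ) / n ≤ (n : ℝ) ^ (τ - 1) := by
        rw [Real.rpow_sub hn0, Real.rpow_one]
        gcongr
      have p2 : (Q : ℝ) / n ≤ Real.log n ^ 2 / n + (n : ℝ)⁻¹ := by
        calc (Q : ℝ) / n ≤ (Real.log n ^ 2 + 1) / n := by gcongr
          _ = Real.log n ^ 2 / n + (n:ℝ)⁻¹ := by rw [add_div, one_div]
      have p3 : ((K : ℝ) * Q) / n ≤ 2 * (Real.log n ^ 2 / ((n:ℝ) ^ τ) + (((n:ℝ) ^ τ))⁻¹) := by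
        have hKQn : ((K : ℝ) * Q) / n ≤ (Q : ℝ) / P := by
          rw [div_le_div_iff₀ hn0 hPpos]
          have : (K : ℝ) * P ≤ n := by exact_mod_cast hKP
          have hQ0 : (0 : ℝ) ≤ Q := Nat.cast_nonneg _
          nlinarith
        have h2 : (Q : ℝ) / P ≤ (Real.log n ^ 2 + 1) / ((n : ℝ) ^ τ / 2) := by
          apply div_le_div₀ (by positivity) hQreal (by positivity) hPreal
        have h3 : (Real.log n ^ 2 + 1) / ((n : ℝ) ^ τ / 2)
            = 2 * (Real.log n ^ 2 / ((n:ℝ) ^ τ) + (((n:ℝ) ^ τ))⁻¹) := by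
          field_simp
        linarith
      -- combine
      have hcast : ((n - K * P : ℕ) : ℝ) = (n : ℝ) - (K : ℝ) * P := by
        rw [Nat.cast_sub hKP]; push_cast; ring
      have hnum : ((n - K * P : ℕ) : ℝ) ≤ (K : ℝ) * Q + P + Q := by
        have := hsub
        exact_mod_cast Nat.cast_le.2 hsub
      calc ((n - K * P : ℕ) : ℝ) / n ≤ ((K : ℝ) * Q + P + Q) / n := by gcongr
        _ = ((K : ℝ) * Q) / n + (P : ℝ) / n + (Q : ℝ) / n := by rw [add_div, add_div]
        _ ≤ (n:ℝ) ^ (τ - 1) + (Real.log n ^ 2 / n + (n:ℝ)⁻¹)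
              + 2 * (Real.log n ^ 2 / ((n:ℝ) ^ τ) + (((n:ℝ) ^ τ))⁻¹) := by linarith
    have := (ha.const_mul (2 * C₁ / σm ^ 2)).add (hb.const_mul (C₀ * (1 - r₀)⁻¹ / σm ^ 2))
    simpa using this
  have main' : ∀ᶠ n : ℕ in atTop,
      ‖(∑ j ∈ Finset.range (blockK τ n), ∫ ω, (xiBlock X τ n j ω) ^ 2 ∂μ) /
          (∫ ω, (Sn X n ω) ^ 2 ∂μ) - 1‖ ≤
        (2 * C₁ / σm ^ 2) * (((n - blockK τ n * blockP τ n : ℕ) : ℝ) / n)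
          + (C₀ * (1 - r₀)⁻¹ / σm ^ 2) * (n * r₀ ^ blockQ n) :=
    main.mono fun n h => by rw [Real.norm_eq_abs]; exact h
  have hfinal := squeeze_zero_norm' main' heps
  have := hfinal.add_const 1
  simpa using this
end
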